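/- arXiv:1405.3039 — 10 statements merged into one kernel-verified Lean document; each statement's English description precedes it below -/
import Mathlib

section
/- Let m ≥ 2 and a ≥ 1 be integers and set n = m^a. Then every feasible catalyst pair (ω, ω') of nonincreasing probability vectors in ℝ^n satisfies d(ω, ω') = (1/2)·∑_{i=1}^n |ω_i − ω'_i| ≥ (m−1)/(1+(m−1)a). -/
/-- A pair `(ω, ω')` of vectors in `ℝ^n` is a feasible catalyst pair (for an
`m`-dimensional system with trivial Hamiltonian) if both are probability vectors
with nonincreasing entries, and the vector obtained by repeating each entry
`ω i / m` exactly `m` times majorizes the vector `(ω'_1, …, ω'_n, 0, …, 0)` in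
`ℝ^(n·m)`, i.e. every partial sum of the former dominates that of the latter.
This encodes the thermo-majorization condition `ω ⊗ (I/m) ≻ ω' ⊗ |0⟩⟨0|`. -/
def FeasiblePair (m n : ℕ) (ω ω' : Fin n → ℝ) : Prop :=
  (∀ i, 0 ≤ ω i) ∧ (∀ i, 0 ≤ ω' i) ∧
  (∑ i, ω i = 1) ∧ (∑ i, ω' i = 1) ∧
  (∀ i j : Fin n, i ≤ j → ω j ≤ ω i) ∧
  (∀ i j : Fin n, i ≤ j → ω' j ≤ ω' i) ∧
  (∀ k, k ≤ n * m →
    (∑ l ∈ Finset.range k, if h : l < n then ω' ⟨l, h⟩ else 0) ≤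
    (∑ l ∈ Finset.range k, if h : l / m < n then ω ⟨l / m, h⟩ / m else 0))

/-- For `m ≥ 2`, `a ≥ 1` and `n = m^a`, every feasible catalyst pair `(ω, ω')`
of nonincreasing probability vectors in `ℝ^n` has trace distance
`(1/2)·∑ |ω i − ω' i| ≥ (m−1)/(1+(m−1)a)`. -/
theorem catalyst_trace_dist_lower_bound (m a n : ℕ) (hm : 2 ≤ m) (ha : 1 ≤ a)
    (hn : n = m ^ a) (ω ω' : Fin n → ℝ) (h : FeasiblePair m n ω ω') :
    ((m : ℝ) - 1) / (1 + ((m : ℝ) - 1) * a) ≤ (1 / 2) * ∑ i, |ω i - ω' i| := by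
  obtain ⟨hω, hω', hs, hs', -, -, hmaj⟩ := h
  have hm0 : 0 < m := by omega
  have hn0 : 0 < n := by subst hn; positivity
  set d : ℝ := (1 / 2) * ∑ i, |ω i - ω' i| with hd
  set f : ℕ → ℝ := fun l => if h : l < n then ω ⟨l, h⟩ else 0 with hf
  set g : ℕ → ℝ := fun l => if h : l < n then ω' ⟨l, h⟩ else 0 with hg
  have hf0 : ∀ l, 0 ≤ f l := by
    intro l; rw [hf]; dsimp only; split
    · exact hω _
    · exact le_refl 0
  have hg0 : ∀ l, 0 ≤ g l := by
    intro l; rw [hg]; dsimp only; split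
    · exact hω' _
    · exact le_refl 0
  -- sums of f, g over range K for K ≥ n equal 1
  have hfn : ∀ K, n ≤ K → ∑ l ∈ Finset.range K, f l = 1 := by
    intro K hK
    rw [← Finset.sum_subset (Finset.range_subset_range.2 hK)
      (by intro x _ hx; rw [Finset.mem_range, not_lt] at hx
          rw [hf]; exact dif_neg (by omega))]
    rw [Finset.sum_range fun i => f i, ← hs]
    exact Finset.sum_congr rfl (fun i _ => by rw [hf]; simp)
  have hgn : ∀ K, n ≤ K → ∑ l ∈ Finset.range K, g l = 1 := by
    intro K hK
    rw [← Finset.sum_subset (Finset.range_subset_range.2 hK)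
      (by intro x _ hx; rw [Finset.mem_range, not_lt] at hx
          rw [hg]; exact dif_neg (by omega))]
    rw [Finset.sum_range fun i => g i, ← hs']
    exact Finset.sum_congr rfl (fun i _ => by rw [hg]; simp)
  -- trace distance dominates prefix-sum differences
  have step : ∀ k, (∑ l ∈ Finset.range k, f l) - (∑ l ∈ Finset.range k, g l) ≤ d := by
    intro k
    set K := max k n with hK
    set φ : ℕ → ℝ := fun l => (f l - g l + |f l - g l|) / 2 with hφ
    have h1 : ∀ l, f l - g l ≤ φ l := by
      intro l; rw [hφ]; dsimp only; linarith [le_abs_self (f l - g l)]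
    have h2 : ∀ l, 0 ≤ φ l := by
      intro l; rw [hφ]; dsimp only; linarith [neg_abs_le (f l - g l)]
    have h3 : (∑ l ∈ Finset.range k, f l) - (∑ l ∈ Finset.range k, g l)
        ≤ ∑ l ∈ Finset.range K, φ l := by
      rw [← Finset.sum_sub_distrib]
      calc ∑ l ∈ Finset.range k, (f l - g l) ≤ ∑ l ∈ Finset.range k, φ l :=
            Finset.sum_le_sum (fun l _ => h1 l)
        _ ≤ ∑ l ∈ Finset.range K, φ l :=
            Finset.sum_le_sum_of_subset_of_nonneg
              (Finset.range_subset_range.2 (le_max_left _ _)) (fun l _ _ => h2 l)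
    have habs : ∑ l ∈ Finset.range K, |f l - g l| = ∑ i, |ω i - ω' i| := by
      rw [← Finset.sum_subset (Finset.range_subset_range.2 (le_max_right k n))
        (by intro x _ hx; rw [Finset.mem_range, not_lt] at hx
            rw [hf, hg]; dsimp only
            rw [dif_neg (by omega), dif_neg (by omega)]; simp)]
      rw [Finset.sum_range fun i => |f i - g i|]
      exact Finset.sum_congr rfl (fun i _ => by rw [hf, hg]; simp)
    have hsum : ∑ l ∈ Finset.range K, φ l = d := by
      rw [hφ]
      dsimp only
      rw [← Finset.sum_div, Finset.sum_add_distrib, Finset.sum_sub_distrib,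
        hfn K (le_max_right _ _), hgn K (le_max_right _ _), habs, hd]
      ring
    linarith [h3, ge_of_eq hsum]
  -- the repeated-entries sum collapses
  have keyB : ∀ q, ∑ l ∈ Finset.range (q * m), f (l / m) / m
      = ∑ l ∈ Finset.range q, f l := by
    intro q
    induction q with
    | zero => simp
    | succ q ih =>
      rw [Nat.succ_mul, Finset.sum_range_add, ih, Finset.sum_range_succ]
      congr 1
      have hterm : ∀ i ∈ Finset.range m, f ((q * m + i) / m) / m = f q / m := by
        intro i hi
        rw [Finset.mem_range] at hi
        congr 2
        rw [mul_comm q m, Nat.mul_add_div hm0, Nat.div_eq_of_lt hi, add_zero]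
      rw [Finset.sum_congr rfl hterm, Finset.sum_const, Finset.card_range, nsmul_eq_mul]
      field_simp
  -- majorization: S'(q·m) ≤ S(q) for q ≤ n
  have key : ∀ q, q ≤ n → (∑ l ∈ Finset.range (q * m), g l) ≤ ∑ l ∈ Finset.range q, f l := by
    intro q hq
    have h1 := hmaj (q * m) (Nat.mul_le_mul_right m hq)
    calc (∑ l ∈ Finset.range (q * m), g l)
        ≤ ∑ l ∈ Finset.range (q * m), (if h : l / m < n then ω ⟨l / m, h⟩ / m else 0) := h1
      _ = ∑ l ∈ Finset.range (q * m), f (l / m) / m := by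
          refine Finset.sum_congr rfl (fun l _ => ?_)
          rw [hf]; dsimp only
          by_cases hln : l / m < n
          · rw [dif_pos hln, dif_pos hln]
          · rw [dif_neg hln, dif_neg hln, zero_div]
      _ = ∑ l ∈ Finset.range q, f l := keyB q
  -- chain: 1 ≤ S(m^(a-1-j)) + j·d for j ≤ a-1
  have chain : ∀ j, j ≤ a - 1 →
      1 ≤ (∑ l ∈ Finset.range (m ^ (a - 1 - j)), f l) + (j : ℝ) * d := by
    intro j
    induction j with
    | zero =>
      intro _
      have h1 := key (m ^ (a - 1)) (by
        rw [hn]; exact Nat.pow_le_pow_right (by omega) (by omega))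
      rw [show m ^ (a - 1) * m = n by rw [hn, ← pow_succ]; congr 1; omega] at h1
      rw [hgn n le_rfl] at h1
      simpa using h1
    | succ j ih =>
      intro hj
      have ih' := ih (by omega)
      have e1 : a - 1 - j = (a - 1 - (j + 1)) + 1 := by omega
      have h2 := key (m ^ (a - 1 - (j + 1))) (by
        rw [hn]; exact Nat.pow_le_pow_right (by omega) (by omega))
      rw [← pow_succ, ← e1] at h2
      have h3 := step (m ^ (a - 1 - j))
      push_cast
      push_cast at ih'
      linarith
  have hchain := chain (a - 1) le_rfl
  rw [Nat.sub_self, pow_zero, Finset.sum_range_one] at hchain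
  have hcast : ((a - 1 : ℕ) : ℝ) = (a : ℝ) - 1 := by
    rw [Nat.cast_sub ha, Nat.cast_one]
  rw [hcast] at hchain
  -- ω'_0 ≤ ω_0 / m
  have hgf : g 0 ≤ f 0 / m := by
    have h1 := hmaj 1 (by nlinarith)
    rw [Finset.sum_range_one, Finset.sum_range_one] at h1
    have : (0 : ℕ) / m = 0 := Nat.zero_div m
    rw [hf, hg]; dsimp only
    rw [dif_pos hn0, dif_pos hn0]
    rw [dif_pos hn0] at h1
    rw [this] at h1
    rw [dif_pos hn0] at h1
    exact h1
  have hstep1 : f 0 - g 0 ≤ d := by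
    have := step 1
    rwa [Finset.sum_range_one, Finset.sum_range_one] at this
  -- final arithmetic
  have hM : (2 : ℝ) ≤ (m : ℝ) := by exact_mod_cast hm
  have hA : (1 : ℝ) ≤ (a : ℝ) := by exact_mod_cast ha
  have hf0' : 0 ≤ f 0 := hf0 0
  have hMpos : (0 : ℝ) < (m : ℝ) := by linarith
  have h4 : f 0 * ((m : ℝ) - 1) ≤ d * (m : ℝ) := by
    have hg0M : g 0 * (m : ℝ) ≤ f 0 := by
      rw [← le_div_iff₀ hMpos]; exact hgf
    nlinarith [mul_le_mul_of_nonneg_right hstep1 (le_of_lt hMpos)]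
  have hden : (0 : ℝ) < 1 + ((m : ℝ) - 1) * (a : ℝ) := by nlinarith
  rw [div_le_iff₀ hden]
  have h5 : ((m : ℝ) - 1) * 1 ≤ ((m : ℝ) - 1) * (f 0 + ((a : ℝ) - 1) * d) :=
    mul_le_mul_of_nonneg_left hchain (by linarith)
  nlinarith [h5, h4]
end

section
/- Let m ≥ 2 and a ≥ 1 be integers and set n = m^a. Define ω'_1 = 1/(1+(m−1)a) and, for 2 ≤ i ≤ n, ω'_i = ω'_1·m^{1−j} where j is the unique integer with m^{j−1} < i ≤ m^j (i.e., j = ⌈log_m i⌉). Define ω_1 = m·ω'_1, ω_i = ω'_i for 2 ≤ i ≤ n/m, and ω_i = 0 for i > n/m. Then ω and ω' are probability vectors with nonincreasing entries, (ω, ω') is a feasible catalyst pair, and d(ω, ω') = (1/2)·∑_{i=1}^n |ω_i − ω'_i| = (m−1)/(1+(m−1)a). -/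
open Finset

noncomputable def wAux (m : ℕ) (c : ℝ) (i : ℕ) : ℝ :=
  if i = 0 then c else c * (m : ℝ) ^ ((1 : ℤ) - (Nat.clog m (i + 1) : ℤ))

variable {m : ℕ} {c : ℝ}

lemma wAux_nonneg (hc : 0 ≤ c) (i : ℕ) : 0 ≤ wAux m c i := by
  unfold wAux; split
  · exact hc
  · positivity

lemma clog_base (hm : 2 ≤ m) {i : ℕ} (h1 : 1 ≤ i) (h2 : i < m) :
    Nat.clog m (i + 1) = 1 := by
  have hb : 1 < m := hm
  have h2' : Nat.clog m (i + 1) ≤ 1 := by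
    rw [Nat.clog_le_iff_le_pow hb]; simpa using h2
  have h1' : 0 < Nat.clog m (i + 1) := Nat.clog_pos hb (by omega)
  omega

lemma wAux_base (hm : 2 ≤ m) {i : ℕ} (h2 : i < m) : wAux m c i = c := by
  unfold wAux; split
  · rfl
  · rename_i h
    rw [clog_base hm (by omega) h2]
    norm_num

lemma clog_child (hm : 2 ≤ m) {q t : ℕ} (hq : 1 ≤ q) (ht : t < m) :
    Nat.clog m (m * q + t + 1) = Nat.clog m (q + 1) + 1 := by
  have hb : 1 < m := hm
  set j := Nat.clog m (q + 1) with hj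
  have hjpos : 0 < j := Nat.clog_pos hb (by omega)
  have hub : q + 1 ≤ m ^ j := (Nat.clog_le_iff_le_pow hb).1 le_rfl
  have hlb : m ^ (j - 1) < q + 1 := by
    rw [← Nat.lt_clog_iff_pow_lt hb]; omega
  have hub' : m * q + t + 1 ≤ m ^ (j + 1) := by
    have h1 : m * (q + 1) ≤ m * m ^ j := Nat.mul_le_mul_left m hub
    have h2 : m * (q + 1) = m * q + m := by ring
    have h3 : m ^ (j + 1) = m * m ^ j := by ring
    omega
  have hlb' : m ^ j < m * q + t + 1 := by
    have : m ^ (j - 1) ≤ q := by omega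
    have h2 : m * m ^ (j - 1) ≤ m * q := Nat.mul_le_mul_left m this
    have h3 : m * m ^ (j - 1) = m ^ j := by
      rw [← pow_succ']
      congr 1
      omega
    omega
  have hle : Nat.clog m (m * q + t + 1) ≤ j + 1 := (Nat.clog_le_iff_le_pow hb).2 hub'
  have hlt : j < Nat.clog m (m * q + t + 1) := (Nat.lt_clog_iff_pow_lt hb).2 hlb'
  omega

lemma wAux_child (hm : 2 ≤ m) {q t : ℕ} (hq : 1 ≤ q) (ht : t < m) :
    wAux m c (m * q + t) = wAux m c q / m := by
  have hm0 : (m : ℝ) ≠ 0 := by positivity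
  unfold wAux
  rw [if_neg (by positivity), if_neg (by omega), clog_child hm hq ht]
  push_cast
  rw [show (1 : ℤ) - (Nat.clog m (q+1) + 1) = ((1 : ℤ) - Nat.clog m (q+1)) + (-1) by ring,
    zpow_add₀ hm0, zpow_neg_one]
  field_simp
open Finset

variable {m : ℕ} {c : ℝ}

lemma wAux_anti (hm : 2 ≤ m) (hc : 0 ≤ c) {i j : ℕ} (hij : i ≤ j) :
    wAux m c j ≤ wAux m c i := by
  have hm1 : (1 : ℝ) ≤ m := by exact_mod_cast (by omega : 1 ≤ m)
  rcases Nat.eq_zero_or_pos j with hj | hj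
  · subst hj; interval_cases i; exact le_rfl
  rcases Nat.eq_zero_or_pos i with hi | hi
  · subst hi
    unfold wAux
    rw [if_pos rfl, if_neg (by omega)]
    have hcl : 0 < Nat.clog m (j + 1) := Nat.clog_pos hm (by omega)
    have : (m : ℝ) ^ ((1 : ℤ) - (Nat.clog m (j + 1) : ℤ)) ≤ 1 := by
      have := zpow_le_zpow_right₀ hm1 (show (1 : ℤ) - (Nat.clog m (j + 1) : ℤ) ≤ 0 by
        omega)
      simpa using this
    nlinarith
  · unfold wAux
    rw [if_neg (by omega), if_neg (by omega)]
    have hcl : Nat.clog m (i + 1) ≤ Nat.clog m (j + 1) := Nat.clog_mono_right _ (by omega)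
    have := zpow_le_zpow_right₀ hm1
      (show (1 : ℤ) - (Nat.clog m (j + 1) : ℤ) ≤ (1 : ℤ) - (Nat.clog m (i + 1) : ℤ) by omega)
    nlinarith

lemma sum_wAux_child (hm : 2 ≤ m) {q : ℕ} (hq : 1 ≤ q) :
    ∑ t ∈ range m, wAux m c (m * q + t) = wAux m c q := by
  have hm0 : (m : ℝ) ≠ 0 := by positivity
  rw [Finset.sum_congr rfl (fun t ht => wAux_child hm hq (mem_range.1 ht))]
  rw [Finset.sum_const, card_range, nsmul_eq_mul]
  field_simp

lemma sum_wAux_mul (hm : 2 ≤ m) {Q : ℕ} (hQ : 1 ≤ Q) :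
    ∑ i ∈ range (Q * m), wAux m c i = (∑ i ∈ range Q, wAux m c i) + ((m : ℝ) - 1) * c := by
  induction Q, hQ using Nat.le_induction with
  | base =>
    rw [one_mul]
    have : ∀ i ∈ range m, wAux m c i = c := fun i hi => wAux_base hm (mem_range.1 hi)
    rw [Finset.sum_congr rfl this, Finset.sum_const, card_range, nsmul_eq_mul]
    simp [wAux]
    ring
  | succ Q hQ ih =>
    have h1 : (Q + 1) * m = Q * m + m := by ring
    rw [h1, Finset.sum_range_add, ih, Finset.sum_range_succ]
    have : ∀ t ∈ range m, wAux m c (Q * m + t) = wAux m c (m * Q + t) := by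
      intro t ht; rw [mul_comm]
    rw [Finset.sum_congr rfl this, sum_wAux_child hm hQ]
    ring

lemma sum_wAux_pow (hm : 2 ≤ m) (b : ℕ) :
    ∑ i ∈ range (m ^ b), wAux m c i = c * (1 + b * ((m : ℝ) - 1)) := by
  induction b with
  | zero => simp [wAux]
  | succ b ih =>
    rw [pow_succ, sum_wAux_mul hm (Nat.one_le_pow _ _ (by omega)), ih]
    push_cast
    ring
noncomputable def wFull (m : ℕ) (c : ℝ) (K : ℕ) (i : ℕ) : ℝ :=
  if i = 0 then m * c else if i < K then wAux m c i else 0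

variable {m K : ℕ} {c : ℝ}

lemma wFull_nonneg (hc : 0 ≤ c) (i : ℕ) : 0 ≤ wFull m c K i := by
  unfold wFull
  split
  · positivity
  · split
    · exact wAux_nonneg hc i
    · exact le_rfl

lemma wAux_zero : wAux m c 0 = c := by simp [wAux]

lemma wAux_le_c (hm : 2 ≤ m) (hc : 0 ≤ c) (i : ℕ) : wAux m c i ≤ c := by
  have := wAux_anti (c := c) hm hc (Nat.zero_le i)
  rwa [wAux_zero] at this

lemma wFull_anti (hm : 2 ≤ m) (hc : 0 ≤ c) {i j : ℕ} (hij : i ≤ j) :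
    wFull m c K j ≤ wFull m c K i := by
  have h2 : (2 : ℝ) ≤ m := by exact_mod_cast hm
  have hmc : c ≤ m * c := by nlinarith
  rcases Nat.eq_zero_or_pos i with hi | hi
  · subst hi
    unfold wFull
    rw [if_pos rfl]
    by_cases hj : j = 0
    · rw [if_pos hj]
    · rw [if_neg hj]
      by_cases hjK : j < K
      · rw [if_pos hjK]; exact le_trans (wAux_le_c hm hc j) hmc
      · rw [if_neg hjK]; positivity
  · unfold wFull
    rw [if_neg (show ¬ j = 0 by omega)]
    by_cases hjK : j < K
    · rw [if_pos hjK, if_neg (show ¬ i = 0 by omega), if_pos (show i < K by omega)]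
      exact wAux_anti hm hc hij
    · rw [if_neg hjK]
      have := wFull_nonneg (m := m) (K := K) hc i
      unfold wFull at this
      exact this

lemma sum_wFull (hm : 2 ≤ m) {L : ℕ} (hL1 : 1 ≤ L) (hLK : L ≤ K) :
    ∑ i ∈ range L, wFull m c K i = ∑ i ∈ range L, wAux m c i + ((m : ℝ) - 1) * c := by
  obtain ⟨L', rfl⟩ : ∃ L', L = L' + 1 := ⟨L - 1, by omega⟩
  rw [Finset.sum_range_succ', Finset.sum_range_succ' (wAux m c)]
  have h1 : ∀ i ∈ range L', wFull m c K (i + 1) = wAux m c (i + 1) := by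
    intro i hi
    have := mem_range.1 hi
    unfold wFull
    rw [if_neg (by omega), if_pos (by omega)]
  rw [Finset.sum_congr rfl h1]
  have : wFull m c K 0 = m * c := by unfold wFull; rw [if_pos rfl]
  rw [this, wAux_zero]
  ring

lemma sum_div_group (f : ℕ → ℝ) (hm0 : 0 < m) (Q : ℕ) :
    ∑ l ∈ range (Q * m), f (l / m) = ∑ i ∈ range Q, (m : ℝ) * f i := by
  induction Q with
  | zero => simp
  | succ Q ih =>
    rw [show (Q + 1) * m = Q * m + m by ring, Finset.sum_range_add, ih,
      Finset.sum_range_succ]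
    congr 1
    have h1 : ∀ t ∈ range m, f ((Q * m + t) / m) = f Q := by
      intro t ht
      have ht' := mem_range.1 ht
      rw [mul_comm Q m, show m * Q + t = t + m * Q by ring, Nat.add_mul_div_left _ _ hm0,
        Nat.div_eq_of_lt ht', Nat.zero_add]
    rw [Finset.sum_congr rfl h1, Finset.sum_const, card_range, nsmul_eq_mul]

lemma clog_eq_of (hm : 2 ≤ m) {x j : ℕ} (hj : 1 ≤ j) (h1 : m ^ (j - 1) < x)
    (h2 : x ≤ m ^ j) : Nat.clog m x = j := by
  have hb : 1 < m := hm
  have hle : Nat.clog m x ≤ j := (Nat.clog_le_iff_le_pow hb).2 h2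
  have hlt : j - 1 < Nat.clog m x := (Nat.lt_clog_iff_pow_lt hb).2 h1
  omega
/-- The explicit catalyst construction: for `n = m^a`, set
`ω'_1 = 1/(1+(m−1)a)` and `ω'_i = ω'_1 · m^{1−⌈log_m i⌉}` for `2 ≤ i ≤ n`
(in 1-based indexing; `Fin n` index `i` corresponds to paper index `i.val + 1`,
and `⌈log_m i⌉ = Nat.clog m i`), with `ω_1 = m·ω'_1`, `ω_i = ω'_i` for
`2 ≤ i ≤ n/m`, and `ω_i = 0` for `i > n/m`. Then `(ω, ω')` is a feasible
catalyst pair with trace distance exactly `(m−1)/(1+(m−1)a)`. -/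
theorem catalyst_construction_optimal (m a n : ℕ) (hm : 2 ≤ m) (ha : 1 ≤ a)
    (hn : n = m ^ a) (h0 : 0 < n) (ω ω' : Fin n → ℝ)
    (hω'1 : ω' ⟨0, h0⟩ = 1 / (1 + ((m : ℝ) - 1) * a))
    (hω' : ∀ i : Fin n, 2 ≤ i.val + 1 →
      ω' i = (1 / (1 + ((m : ℝ) - 1) * a)) *
        (m : ℝ) ^ ((1 : ℤ) - (Nat.clog m (i.val + 1) : ℤ)))
    (hω1 : ω ⟨0, h0⟩ = (m : ℝ) * (1 / (1 + ((m : ℝ) - 1) * a)))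
    (hωmid : ∀ i : Fin n, 2 ≤ i.val + 1 → i.val + 1 ≤ n / m → ω i = ω' i)
    (hωtail : ∀ i : Fin n, n / m < i.val + 1 → ω i = 0) :
    FeasiblePair m n ω ω' ∧
      (1 / 2) * ∑ i, |ω i - ω' i| = ((m : ℝ) - 1) / (1 + ((m : ℝ) - 1) * a) := by
  have hm0 : 0 < m := by omega
  have h2R : (2 : ℝ) ≤ m := by exact_mod_cast hm
  have haR : (1 : ℝ) ≤ a := by exact_mod_cast ha
  have hD : (0 : ℝ) < 1 + ((m : ℝ) - 1) * a := by nlinarith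
  set c : ℝ := 1 / (1 + ((m : ℝ) - 1) * a) with hc_def
  have hc : 0 < c := by positivity
  have hpow : n = m ^ (a - 1) * m := by
    rw [hn, ← pow_succ, Nat.sub_add_cancel ha]
  have hnm : n / m = m ^ (a - 1) := by
    rw [hpow, Nat.mul_div_cancel _ hm0]
  have hnm1 : 1 ≤ n / m := by rw [hnm]; exact Nat.one_le_pow _ _ hm0
  have hdvd : m ∣ n := hn ▸ dvd_pow_self m (by omega : a ≠ 0)
  have hw' : ∀ i : Fin n, ω' i = wAux m c i.val := by
    intro i
    rcases Nat.eq_zero_or_pos i.val with h | h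
    · have hi : i = ⟨0, h0⟩ := Fin.ext h
      rw [hi, hω'1]; simp [wAux]
    · rw [hω' i (by omega)]
      unfold wAux
      rw [if_neg (by omega)]
  have hw : ∀ i : Fin n, ω i = wFull m c (n / m) i.val := by
    intro i
    rcases Nat.eq_zero_or_pos i.val with h | h
    · have hi : i = ⟨0, h0⟩ := Fin.ext h
      rw [hi, hω1]
      unfold wFull
      rw [if_pos rfl]
    · by_cases hiK : i.val < n / m
      · rw [hωmid i (by omega) (by omega), hw' i]
        unfold wFull
        rw [if_neg (by omega), if_pos hiK]
      · rw [hωtail i (by omega)]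
        unfold wFull
        rw [if_neg (by omega), if_neg hiK]
  have hone : ∑ i ∈ range n, wAux m c i = 1 := by
    rw [hn, sum_wAux_pow hm a, hc_def]
    field_simp
  have honeF : ∑ i ∈ range (n / m), wFull m c (n / m) i = 1 := by
    rw [sum_wFull hm hnm1 le_rfl, hnm, sum_wAux_pow hm (a - 1),
      Nat.cast_sub ha, hc_def]
    push_cast
    field_simp
    ring
  refine ⟨⟨?_, ?_, ?_, ?_, ?_, ?_, ?_⟩, ?_⟩
  · intro i; rw [hw i]; exact wFull_nonneg hc.le _
  · intro i; rw [hw' i]; exact wAux_nonneg hc.le _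
  · calc ∑ i, ω i = ∑ i : Fin n, wFull m c (n / m) i.val :=
          Finset.sum_congr rfl (fun i _ => hw i)
      _ = ∑ i ∈ range n, wFull m c (n / m) i := Fin.sum_univ_eq_sum_range _ n
      _ = ∑ i ∈ range (n / m), wFull m c (n / m) i := by
          refine (Finset.sum_subset (Finset.range_subset_range.2 (Nat.div_le_self n m)) ?_).symm
          intro x hx hx'
          have h1 : ¬ x < n / m := by simpa using hx'
          unfold wFull
          rw [if_neg (by omega), if_neg h1]
      _ = 1 := honeF
  · calc ∑ i, ω' i = ∑ i : Fin n, wAux m c i.val :=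
          Finset.sum_congr rfl (fun i _ => hw' i)
      _ = ∑ i ∈ range n, wAux m c i := Fin.sum_univ_eq_sum_range _ n
      _ = 1 := hone
  · intro i j hij; rw [hw i, hw j]; exact wFull_anti hm hc.le hij
  · intro i j hij; rw [hw' i, hw' j]; exact wAux_anti hm hc.le hij
  · intro k hk
    have hL : (∑ l ∈ range k, if h : l < n then ω' ⟨l, h⟩ else 0)
        = ∑ l ∈ range (min k n), wAux m c l := by
      have h1 : ∀ l ∈ range k, (if h : l < n then ω' ⟨l, h⟩ else 0)
          = (if l < n then wAux m c l else 0) := by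
        intro l _
        by_cases h : l < n
        · rw [dif_pos h, if_pos h, hw' ⟨l, h⟩]
        · rw [dif_neg h, if_neg h]
      rw [Finset.sum_congr rfl h1]
      rcases le_or_gt k n with hkn | hkn
      · rw [min_eq_left hkn]
        exact Finset.sum_congr rfl
          (fun l hl => if_pos (lt_of_lt_of_le (mem_range.1 hl) hkn))
      · rw [min_eq_right hkn.le]
        calc ∑ l ∈ range k, (if l < n then wAux m c l else 0)
            = ∑ l ∈ range n, (if l < n then wAux m c l else 0) :=
              (Finset.sum_subset (Finset.range_subset_range.2 hkn.le)
                (fun x _ hx => if_neg (by simpa using hx))).symm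
          _ = ∑ l ∈ range n, wAux m c l :=
              Finset.sum_congr rfl (fun l hl => if_pos (mem_range.1 hl))
    have hR : (∑ l ∈ range k, if h : l / m < n then ω ⟨l / m, h⟩ / m else 0)
        = ∑ i ∈ range (k / m), wFull m c (n / m) i
          + ((k % m : ℕ) : ℝ) * (wFull m c (n / m) (k / m) / m) := by
      have h1 : ∀ l ∈ range k, (if h : l / m < n then ω ⟨l / m, h⟩ / m else 0)
          = wFull m c (n / m) (l / m) / m := by
        intro l hl
        have hln : l / m < n := by
          rw [Nat.div_lt_iff_lt_mul hm0]
          exact lt_of_lt_of_le (mem_range.1 hl) hk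
        rw [dif_pos hln, hw ⟨l / m, hln⟩]
      rw [Finset.sum_congr rfl h1]
      conv_lhs => rw [show k = k / m * m + k % m from (Nat.div_add_mod' k m).symm]
      rw [Finset.sum_range_add, sum_div_group (fun i => wFull m c (n / m) i / m) hm0]
      congr 1
      · refine Finset.sum_congr rfl (fun i _ => ?_)
        field_simp
      · have h2 : ∀ t ∈ range (k % m),
            wFull m c (n / m) ((k / m * m + t) / m) / m
              = wFull m c (n / m) (k / m) / m := by
          intro t ht
          have htm : t < m := lt_of_lt_of_le (mem_range.1 ht) (Nat.mod_lt _ hm0).le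
          rw [show k / m * m + t = t + m * (k / m) by ring,
            Nat.add_mul_div_left _ _ hm0, Nat.div_eq_of_lt htm, Nat.zero_add]
        rw [Finset.sum_congr rfl h2, Finset.sum_const, card_range, nsmul_eq_mul]
    rw [hL, hR]
    rcases lt_or_ge k n with hkn | hkn
    · rw [min_eq_left hkn.le]
      rcases Nat.eq_zero_or_pos (k / m) with hq0 | hq0
      · have hkm : k < m := by
          by_contra hcon
          have := Nat.one_le_div_iff hm0 |>.2 (by omega : m ≤ k)
          omega
        have hkr : k % m = k := Nat.mod_eq_of_lt hkm
        have hLv : ∑ l ∈ range k, wAux m c l = k * c := by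
          rw [Finset.sum_congr rfl
            (fun l hl => wAux_base hm (lt_of_lt_of_le (mem_range.1 hl) hkm.le)),
            Finset.sum_const, card_range, nsmul_eq_mul]
        have hW0 : wFull m c (n / m) 0 = m * c := by unfold wFull; rw [if_pos rfl]
        rw [hLv, hq0, hkr, hW0]
        simp only [Finset.range_zero, Finset.sum_empty, zero_add]
        apply le_of_eq
        have hm0' : (m : ℝ) ≠ 0 := by positivity
        field_simp
      · have hqlt : k / m < n / m := Nat.div_lt_div_of_lt_of_dvd hdvd hkn
        apply le_of_eq
        have hrm : k % m < m := Nat.mod_lt _ hm0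
        have e1 : ∑ l ∈ range k, wAux m c l
            = ∑ i ∈ range (k / m), wAux m c i + ((m : ℝ) - 1) * c
              + ((k % m : ℕ) : ℝ) * (wAux m c (k / m) / m) := by
          conv_lhs => rw [show k = k / m * m + k % m from (Nat.div_add_mod' k m).symm]
          rw [Finset.sum_range_add, sum_wAux_mul hm hq0]
          congr 1
          have h3 : ∀ t ∈ range (k % m),
              wAux m c (k / m * m + t) = wAux m c (k / m) / m := by
            intro t ht
            rw [mul_comm (k / m) m]
            exact wAux_child hm hq0 (lt_of_lt_of_le (mem_range.1 ht) hrm.le)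
          rw [Finset.sum_congr rfl h3, Finset.sum_const, card_range, nsmul_eq_mul]
        have e2 : wFull m c (n / m) (k / m) = wAux m c (k / m) := by
          unfold wFull; rw [if_neg (by omega), if_pos hqlt]
        rw [e1, e2, sum_wFull hm hq0 hqlt.le]
    · rw [min_eq_right hkn, hone]
      have hqge : n / m ≤ k / m := Nat.div_le_div_right hkn
      calc (1 : ℝ) = ∑ i ∈ range (n / m), wFull m c (n / m) i := honeF.symm
        _ ≤ ∑ i ∈ range (k / m), wFull m c (n / m) i :=
            Finset.sum_le_sum_of_subset_of_nonneg (Finset.range_subset_range.2 hqge)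
              (fun i _ _ => wFull_nonneg hc.le i)
        _ ≤ _ := le_add_of_nonneg_right
            (mul_nonneg (Nat.cast_nonneg _)
              (div_nonneg (wFull_nonneg hc.le _) (by positivity)))
  · have hdist : ∑ i : Fin n, |ω i - ω' i|
        = ∑ i ∈ range n, |wFull m c (n / m) i - wAux m c i| := by
      rw [← Fin.sum_univ_eq_sum_range (fun i => |wFull m c (n / m) i - wAux m c i|) n]
      exact Finset.sum_congr rfl fun i _ => by rw [hw i, hw' i]
    have hle : n / m ≤ n := Nat.div_le_self n m
    have hsum2 : ∑ i ∈ range n, |wFull m c (n / m) i - wAux m c i|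
        = ∑ i ∈ range (n / m), |wFull m c (n / m) i - wAux m c i|
          + ∑ t ∈ range (n - n / m),
              |wFull m c (n / m) (n / m + t) - wAux m c (n / m + t)| := by
      rw [← Finset.sum_range_add, Nat.add_sub_cancel' hle]
    rw [hdist, hsum2]
    have hfirst : ∑ i ∈ range (n / m), |wFull m c (n / m) i - wAux m c i|
        = ((m : ℝ) - 1) * c := by
      obtain ⟨K', hK'⟩ : ∃ K', n / m = K' + 1 := ⟨n / m - 1, by omega⟩
      rw [hK', Finset.sum_range_succ']
      have hz : ∀ i ∈ range K',
          |wFull m c (K' + 1) (i + 1) - wAux m c (i + 1)| = 0 := by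
        intro i hi
        have hi' := mem_range.1 hi
        have he : wFull m c (K' + 1) (i + 1) = wAux m c (i + 1) := by
          unfold wFull; rw [if_neg (by omega), if_pos (by omega)]
        rw [he, sub_self, abs_zero]
      rw [Finset.sum_congr rfl hz, Finset.sum_const, smul_zero, zero_add]
      have hW0 : wFull m c (K' + 1) 0 = m * c := by unfold wFull; rw [if_pos rfl]
      rw [hW0, wAux_zero, abs_of_nonneg (by nlinarith)]
      ring
    have hsecond : ∑ t ∈ range (n - n / m),
        |wFull m c (n / m) (n / m + t) - wAux m c (n / m + t)| = ((m : ℝ) - 1) * c := by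
      have hterm : ∀ t ∈ range (n - n / m),
          |wFull m c (n / m) (n / m + t) - wAux m c (n / m + t)|
            = c * (m : ℝ) ^ ((1 : ℤ) - a) := by
        intro t ht
        have ht' := mem_range.1 ht
        have hWF : wFull m c (n / m) (n / m + t) = 0 := by
          unfold wFull; rw [if_neg (by omega), if_neg (by omega)]
        have hclog : Nat.clog m (n / m + t + 1) = a := by
          refine clog_eq_of hm ha ?_ ?_
          · rw [← hnm]; omega
          · rw [← hn]
            have hle : n / m ≤ n := Nat.div_le_self n m
            omega
        have hWA : wAux m c (n / m + t) = c * (m : ℝ) ^ ((1 : ℤ) - a) := by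
          unfold wAux
          rw [if_neg (by omega), hclog]
        rw [hWF, hWA, zero_sub, abs_neg, abs_of_nonneg (by positivity)]
      rw [Finset.sum_congr rfl hterm, Finset.sum_const, card_range, nsmul_eq_mul]
      have hmR : (m : ℝ) ≠ 0 := by positivity
      have hcast : ((n - n / m : ℕ) : ℝ) = (m : ℝ) ^ a - (m : ℝ) ^ (a - 1) := by
        rw [Nat.cast_sub (Nat.div_le_self n m), hnm, hn]
        push_cast
        ring
      have hz1 : (m : ℝ) ^ a * (m : ℝ) ^ ((1 : ℤ) - a) = m := by
        rw [← zpow_natCast (m : ℝ) a, ← zpow_add₀ hmR]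
        norm_num
      have hz2 : (m : ℝ) ^ (a - 1) * (m : ℝ) ^ ((1 : ℤ) - a) = 1 := by
        rw [← zpow_natCast (m : ℝ) (a - 1), ← zpow_add₀ hmR,
          show ((a - 1 : ℕ) : ℤ) + ((1 : ℤ) - a) = 0 by omega, zpow_zero]
      calc ((n - n / m : ℕ) : ℝ) * (c * (m : ℝ) ^ ((1 : ℤ) - a))
          = c * ((m : ℝ) ^ a * (m : ℝ) ^ ((1 : ℤ) - a))
            - c * ((m : ℝ) ^ (a - 1) * (m : ℝ) ^ ((1 : ℤ) - a)) := by
            rw [hcast]; ring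
        _ = ((m : ℝ) - 1) * c := by rw [hz1, hz2]; ring
    rw [hfirst, hsecond, hc_def]
    field_simp
    ring
end

section
/- Let m ≥ 2 be an integer and take n = m. If (ω, ω') is a feasible catalyst pair of nonincreasing probability vectors in ℝ^m, then necessarily ω_1 = 1 and ω_i = 0 for all i ≥ 2, while ω'_i = 1/m for all 1 ≤ i ≤ m; consequently d(ω, ω') = (1/2)·∑_{i=1}^m |ω_i − ω'_i| = 1 − 1/m. -/
/-- Base case `n = m`: any feasible catalyst pair in dimension `m` must have
`ω = (1, 0, …, 0)`, `ω' = (1/m, …, 1/m)`, and hence trace distance `1 − 1/m`. -/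
theorem catalyst_base_case (m : ℕ) (hm : 2 ≤ m) (h0 : 0 < m)
    (ω ω' : Fin m → ℝ) (h : FeasiblePair m m ω ω') :
    ω ⟨0, h0⟩ = 1 ∧ (∀ i : Fin m, 1 ≤ i.val → ω i = 0) ∧
      (∀ i : Fin m, ω' i = 1 / m) ∧
      (1 / 2) * ∑ i, |ω i - ω' i| = 1 - 1 / m := by
  obtain ⟨hω, hω', hs, hs', hmono, hmono', hmaj⟩ := h
  have hmpos : (0:ℝ) < m := by exact_mod_cast h0
  -- key inequality at k = m
  have key := hmaj m (Nat.le_mul_of_pos_left m h0)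
  have e1 : (∑ l ∈ Finset.range m, if h : l < m then ω' ⟨l, h⟩ else 0) = 1 := by
    rw [← hs', ← Fin.sum_univ_eq_sum_range (fun l => if h : l < m then ω' ⟨l, h⟩ else 0)]
    exact Finset.sum_congr rfl fun i _ => by simp
  have e2 : (∑ l ∈ Finset.range m, if h : l / m < m then ω ⟨l / m, h⟩ / m else 0)
      = ω ⟨0, h0⟩ := by
    have hc : ∀ l ∈ Finset.range m,
        (if h : l / m < m then ω ⟨l / m, h⟩ / m else 0) = ω ⟨0, h0⟩ / m := by
      intro l hl
      have hl' : l / m = 0 := Nat.div_eq_of_lt (Finset.mem_range.mp hl)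
      simp only [hl']
      rw [dif_pos h0]
    rw [Finset.sum_congr rfl hc, Finset.sum_const, Finset.card_range, nsmul_eq_mul]
    field_simp
  rw [e1, e2] at key
  have hω0le : ω ⟨0, h0⟩ ≤ 1 := by
    rw [← hs]
    exact Finset.single_le_sum (fun i _ => hω i) (Finset.mem_univ _)
  have hω0 : ω ⟨0, h0⟩ = 1 := le_antisymm hω0le key
  -- remaining entries of ω are zero
  have hsplit := Finset.add_sum_erase Finset.univ ω (Finset.mem_univ (⟨0, h0⟩ : Fin m))
  have hrest0 : ∑ i ∈ Finset.univ.erase (⟨0, h0⟩ : Fin m), ω i = 0 := by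
    rw [hs] at hsplit; linarith [hω0]
  have hrest : ∀ i : Fin m, 1 ≤ i.val → ω i = 0 := by
    intro i hi
    have hmem : i ∈ Finset.univ.erase (⟨0, h0⟩ : Fin m) := by
      refine Finset.mem_erase.mpr ⟨?_, Finset.mem_univ _⟩
      intro hcontra
      rw [hcontra] at hi
      simp at hi
    exact (Finset.sum_eq_zero_iff_of_nonneg (fun j _ => hω j)).mp hrest0 i hmem
  -- ω' entries all ≤ 1/m
  have h1 := hmaj 1 (le_trans h0 (Nat.le_mul_of_pos_left m h0))
  simp only [Finset.sum_range_one, Nat.zero_div, dif_pos h0] at h1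
  rw [hω0] at h1
  have hle : ∀ i : Fin m, ω' i ≤ 1 / m := fun i =>
    le_trans (hmono' ⟨0, h0⟩ i (Fin.le_def.mpr (Nat.zero_le _))) h1
  have hconst : ∑ _i : Fin m, (1 / m : ℝ) = 1 := by
    rw [Finset.sum_const, Finset.card_univ, Fintype.card_fin, nsmul_eq_mul]
    field_simp
  have hω'eq : ∀ i : Fin m, ω' i = 1 / m := by
    intro i
    by_contra hne
    have hlt : ω' i < 1 / m := lt_of_le_of_ne (hle i) hne
    have : ∑ j, ω' j < ∑ _j : Fin m, (1 / m : ℝ) :=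
      Finset.sum_lt_sum (fun j _ => hle j) ⟨i, Finset.mem_univ i, hlt⟩
    rw [hs', hconst] at this
    exact lt_irrefl _ this
  refine ⟨hω0, hrest, hω'eq, ?_⟩
  -- compute the trace distance
  have hinvle : (1 / m : ℝ) ≤ 1 := by
    rw [div_le_one hmpos]; exact_mod_cast h0
  have habs : ∑ i, |ω i - ω' i| = 2 - 2 / m := by
    rw [← Finset.add_sum_erase Finset.univ (fun i => |ω i - ω' i|)
      (Finset.mem_univ (⟨0, h0⟩ : Fin m))]
    have t1 : |ω ⟨0, h0⟩ - ω' ⟨0, h0⟩| = 1 - 1 / m := by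
      rw [hω0, hω'eq, abs_of_nonneg (by linarith)]
    have t2 : ∀ i ∈ Finset.univ.erase (⟨0, h0⟩ : Fin m), |ω i - ω' i| = 1 / m := by
      intro i hi
      have hi' : 1 ≤ i.val := by
        rcases Finset.mem_erase.mp hi with ⟨hne, _⟩
        rcases Nat.eq_zero_or_pos i.val with h' | h'
        · exact absurd (Fin.ext h') hne
        · exact h'
      rw [hrest i hi', hω'eq, zero_sub, abs_neg, abs_of_nonneg (by positivity)]
    rw [Finset.sum_congr rfl t2, Finset.sum_const,
      Finset.card_erase_of_mem (Finset.mem_univ _), Finset.card_univ, Fintype.card_fin,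
      nsmul_eq_mul, t1, Nat.cast_sub h0, Nat.cast_one]
    field_simp
    ring
  rw [habs]
  ring
end

section
/- Let m ≥ 2 be an integer, let n be a multiple of m, and let (ω, ω') be a feasible catalyst pair of nonincreasing probability vectors in ℝ^n. Define ω̃ ∈ ℝ^n by ω̃_i = ω'_i if ω_i > ω'_i and ω̃_i = ω_i otherwise, for 2 ≤ i ≤ n, and ω̃_1 = 1 − ∑_{i=2}^n ω̃_i. Then ω̃ is a probability vector with nonincreasing entries, the pair (ω̃, ω') is again a feasible catalyst pair, and d(ω̃, ω') = d(ω, ω'). -/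
lemma blocksum (m : ℕ) (hm0 : 0 < m) (g : ℕ → ℝ) :
    ∀ N, ∑ l ∈ Finset.range (N * m), g (l / m) = ∑ i ∈ Finset.range N, m * g i := by
  intro N
  induction N with
  | zero => simp
  | succ N ih =>
    have h1 : (N + 1) * m = N * m + m := by ring
    rw [h1, Finset.range_eq_Ico,
      ← Finset.sum_Ico_consecutive (fun l => g (l / m)) (Nat.zero_le (N * m))
        (Nat.le_add_right _ m), ← Finset.range_eq_Ico, ih, Finset.sum_range_succ]
    congr 1
    have h2 : ∀ l ∈ Finset.Ico (N * m) (N * m + m), g (l / m) = g N := by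
      intro l hl
      rw [Finset.mem_Ico] at hl
      rw [Nat.div_eq_of_lt_le hl.1 (by omega)]
    rw [Finset.sum_congr rfl h2, Finset.sum_const, Nat.card_Ico]
    simp [nsmul_eq_mul]

lemma sum_range_dite {n : ℕ} (f : Fin n → ℝ) :
    ∑ i ∈ Finset.range n, (if h : i < n then f ⟨i, h⟩ else 0) = ∑ i, f i := by
  rw [← Fin.sum_univ_eq_sum_range (fun l => if h : l < n then f ⟨l, h⟩ else 0) n]
  exact Finset.sum_congr rfl fun i _ => by simp

/-- Piling the majorization advantage on the first entry: replacing `ω` by `ω̃`,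
where `ω̃_i = min(ω_i, ω'_i)` for `i ≥ 2` (i.e. `ω̃_i = ω'_i` if `ω_i > ω'_i`
and `ω̃_i = ω_i` otherwise) and `ω̃_1 = 1 − ∑_{i≥2} ω̃_i`, yields again a
feasible catalyst pair `(ω̃, ω')`, with unchanged trace distance. -/
theorem catalyst_pile_on_first (m n : ℕ) (hm : 2 ≤ m) (h0 : 0 < n) (hmn : m ∣ n)
    (ω ω' ωt : Fin n → ℝ) (h : FeasiblePair m n ω ω')
    (hωt : ∀ i : Fin n, 1 ≤ i.val → ωt i = if ω' i < ω i then ω' i else ω i)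
    (hωt1 : ωt ⟨0, h0⟩ =
      1 - ∑ i ∈ Finset.univ.filter (fun i : Fin n => 1 ≤ i.val), ωt i) :
    FeasiblePair m n ωt ω' ∧
      (1 / 2) * ∑ i, |ωt i - ω' i| = (1 / 2) * ∑ i, |ω i - ω' i| := by
  obtain ⟨hω0, hω'0, hωs, hω's, hωmono, hω'mono, hmaj⟩ := h
  have hm0 : 0 < m := by omega
  have hmR : (0 : ℝ) < m := by positivity
  set e0 : Fin n := ⟨0, h0⟩ with he0
  -- splitting sums over Fin n into first entry plus the rest
  have hsplit : ∀ f : Fin n → ℝ,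
      ∑ i, f i = f e0 + ∑ i ∈ Finset.univ.filter (fun i : Fin n => 1 ≤ i.val), f i := by
    intro f
    have hfilt : Finset.univ.filter (fun i : Fin n => ¬ 1 ≤ i.val) = {e0} := by
      ext i
      simp only [Finset.mem_filter, Finset.mem_univ, true_and, not_le,
        Finset.mem_singleton, Fin.ext_iff, he0, Nat.lt_one_iff]
    rw [← Finset.sum_filter_add_sum_filter_not Finset.univ (fun i : Fin n => 1 ≤ i.val) f,
      hfilt, Finset.sum_singleton, add_comm]
  -- ωt is pointwise min on indices ≥ 1
  have hmin : ∀ i : Fin n, 1 ≤ i.val → ωt i = min (ω i) (ω' i) := by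
    intro i hi
    rw [hωt i hi, min_def]
    split_ifs <;> linarith
  have hle : ∀ i : Fin n, 1 ≤ i.val → ωt i ≤ ω i := fun i hi => by
    rw [hmin i hi]; exact min_le_left _ _
  have hle' : ∀ i : Fin n, 1 ≤ i.val → ωt i ≤ ω' i := fun i hi => by
    rw [hmin i hi]; exact min_le_right _ _
  have hnn : ∀ i : Fin n, 1 ≤ i.val → 0 ≤ ωt i := fun i hi => by
    rw [hmin i hi]; exact le_min (hω0 i) (hω'0 i)
  -- first entry grows
  have hd0 : ω e0 ≤ ωt e0 := by
    have h1 := hsplit ω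
    have h2 : ∑ i ∈ Finset.univ.filter (fun i : Fin n => 1 ≤ i.val), ωt i ≤
        ∑ i ∈ Finset.univ.filter (fun i : Fin n => 1 ≤ i.val), ω i := by
      apply Finset.sum_le_sum
      intro i hi
      exact hle i (Finset.mem_filter.mp hi).2
    rw [hωt1]
    linarith [hωs ▸ h1]
  have hωtsum : ∑ i, ωt i = 1 := by rw [hsplit ωt, hωt1]; ring
  have hωt0 : ∀ i, 0 ≤ ωt i := by
    intro i
    rcases Nat.eq_zero_or_pos i.val with hi | hi
    · have : i = e0 := by simp [Fin.ext_iff, he0, hi]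
      rw [this]; exact le_trans (hω0 e0) hd0
    · exact hnn i hi
  have hωtmono : ∀ i j : Fin n, i ≤ j → ωt j ≤ ωt i := by
    intro i j hij
    rcases Nat.eq_zero_or_pos i.val with hi | hi
    · have hie : i = e0 := by simp [Fin.ext_iff, he0, hi]
      rcases Nat.eq_zero_or_pos j.val with hj | hj
      · have : j = e0 := by simp [Fin.ext_iff, he0, hj]
        rw [this, hie]
      · calc ωt j ≤ ω j := hle j hj
          _ ≤ ω e0 := hωmono e0 j (by simp [he0, Fin.le_def])
          _ ≤ ωt e0 := hd0
          _ = ωt i := by rw [hie]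
    · rw [hmin i hi, hmin j (le_trans hi hij)]
      exact min_le_min (hωmono i j hij) (hω'mono i j hij)
  -- the difference function on ℕ
  set G : ℕ → ℝ := fun l => if h : l < n then (ωt ⟨l, h⟩ - ω ⟨l, h⟩) / m else 0 with hG
  have hG0 : 0 ≤ G 0 := by
    rw [hG]; simp only [dif_pos h0]
    have : (0:ℝ) ≤ ωt ⟨0, h0⟩ - ω ⟨0, h0⟩ := by rw [← he0]; linarith
    positivity
  have hGneg : ∀ l, 1 ≤ l → G l ≤ 0 := by
    intro l hl
    simp only [hG]
    split_ifs with hln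
    · have := hle ⟨l, hln⟩ hl
      apply div_nonpos_of_nonpos_of_nonneg <;> linarith
    · exact le_refl 0
  have hGtot : ∑ l ∈ Finset.range (n * m), G (l / m) = 0 := by
    rw [blocksum m hm0 G n]
    have : ∀ i ∈ Finset.range n, m * G i =
        (if h : i < n then ωt ⟨i, h⟩ - ω ⟨i, h⟩ else 0) := by
      intro i hi
      rw [hG]
      simp only [dif_pos (Finset.mem_range.mp hi)]
      field_simp
    rw [Finset.sum_congr rfl this, sum_range_dite (fun i => ωt i - ω i),
      Finset.sum_sub_distrib, hωtsum, hωs]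
    ring
  have hF : ∀ k, k ≤ n * m → 0 ≤ ∑ l ∈ Finset.range k, G (l / m) := by
    intro k hk
    by_cases hkm : k ≤ m
    · apply Finset.sum_nonneg
      intro l hl
      rw [Nat.div_eq_of_lt (lt_of_lt_of_le (Finset.mem_range.mp hl) hkm)]
      exact hG0
    · have hsplit2 : ∑ l ∈ Finset.range k, G (l / m) +
          ∑ l ∈ Finset.Ico k (n * m), G (l / m) = ∑ l ∈ Finset.range (n * m), G (l / m) := by
        rw [Finset.range_eq_Ico, Finset.range_eq_Ico]
        exact Finset.sum_Ico_consecutive (fun l => G (l / m)) (Nat.zero_le k) hk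
      have htail : ∑ l ∈ Finset.Ico k (n * m), G (l / m) ≤ 0 := by
        apply Finset.sum_nonpos
        intro l hl
        rw [Finset.mem_Ico] at hl
        apply hGneg
        rw [Nat.one_le_div_iff hm0]
        omega
      linarith [hGtot ▸ hsplit2]
  have hω'0le : ω' e0 ≤ ω e0 := by
    have h1 := hmaj 1 (Nat.one_le_iff_ne_zero.mpr (Nat.pos_iff_ne_zero.mp (Nat.mul_pos h0 hm0)))
    simp only [Finset.sum_range_one, Nat.zero_div, dif_pos h0] at h1
    have h2 : ω ⟨0, h0⟩ / (m:ℝ) ≤ ω ⟨0, h0⟩ :=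
      div_le_self (hω0 _) (by exact_mod_cast (by omega : 1 ≤ m))
    rw [he0]
    linarith
  refine ⟨⟨hωt0, hω'0, hωtsum, hω's, hωtmono, hω'mono, ?_⟩, ?_⟩
  · intro k hk
    have hdiff : (∑ l ∈ Finset.range k, if h : l / m < n then ωt ⟨l / m, h⟩ / m else 0) -
        (∑ l ∈ Finset.range k, if h : l / m < n then ω ⟨l / m, h⟩ / m else 0) =
        ∑ l ∈ Finset.range k, G (l / m) := by
      rw [← Finset.sum_sub_distrib]
      apply Finset.sum_congr rfl
      intro l _
      simp only [hG]
      by_cases hln : l / m < n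
      · simp only [dif_pos hln]; ring
      · simp only [dif_neg hln]; ring
    have h1 := hmaj k hk
    have h2 := hF k hk
    linarith
  · have hterm : ∀ i ∈ Finset.univ.filter (fun i : Fin n => 1 ≤ i.val),
        |ωt i - ω' i| = |ω i - ω' i| - (ω i - ωt i) := by
      intro i hi
      have hi1 : 1 ≤ i.val := (Finset.mem_filter.mp hi).2
      rw [hωt i hi1]
      by_cases hc : ω' i < ω i
      · rw [if_pos hc, sub_self, abs_zero,
          abs_of_nonneg (by linarith : (0:ℝ) ≤ ω i - ω' i)]
        ring
      · rw [if_neg hc]; ring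
    have hsum1 : ∑ i ∈ Finset.univ.filter (fun i : Fin n => 1 ≤ i.val), |ωt i - ω' i| =
        (∑ i ∈ Finset.univ.filter (fun i : Fin n => 1 ≤ i.val), |ω i - ω' i|) -
        ∑ i ∈ Finset.univ.filter (fun i : Fin n => 1 ≤ i.val), (ω i - ωt i) := by
      rw [Finset.sum_congr rfl hterm, Finset.sum_sub_distrib]
    have hB : ∑ i ∈ Finset.univ.filter (fun i : Fin n => 1 ≤ i.val), (ω i - ωt i) =
        ωt e0 - ω e0 := by
      rw [Finset.sum_sub_distrib]
      have h1 := hsplit ω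
      have h2 := hsplit ωt
      rw [hωs] at h1
      rw [hωtsum] at h2
      linarith
    have e1 : ∑ i, |ωt i - ω' i| = |ωt e0 - ω' e0| +
        ∑ i ∈ Finset.univ.filter (fun i : Fin n => 1 ≤ i.val), |ωt i - ω' i| :=
      hsplit (fun i => |ωt i - ω' i|)
    have e2 : ∑ i, |ω i - ω' i| = |ω e0 - ω' e0| +
        ∑ i ∈ Finset.univ.filter (fun i : Fin n => 1 ≤ i.val), |ω i - ω' i| :=
      hsplit (fun i => |ω i - ω' i|)
    have g1 : |ωt e0 - ω' e0| = ωt e0 - ω' e0 := abs_of_nonneg (by linarith)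
    have g2 : |ω e0 - ω' e0| = ω e0 - ω' e0 := abs_of_nonneg (by linarith)
    rw [e1, e2, g1, g2]
    linarith
end

section
/- Let m ≥ 2 be an integer. For each multiple n of m let d_{m,n} denote the infimum of d(ω, ω') = (1/2)·∑_{i=1}^n |ω_i − ω'_i| over all feasible catalyst pairs (ω, ω') of nonincreasing probability vectors in ℝ^n. Then for every integer a ≥ 1, with n = m^a and k = m^{a+1}, one has d_{m,k} ≥ d_{m,n}/(1 + d_{m,n}). -/
private lemma sum_div_blocks (m q : ℕ) (hm : 0 < m) (f : ℕ → ℝ) :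
    ∑ l ∈ Finset.range (q * m), f (l / m) = ∑ t ∈ Finset.range q, (m : ℝ) * f t := by
  induction q with
  | zero => simp
  | succ q ih =>
    have h1 : (q + 1) * m = q * m + m := by ring
    rw [Finset.sum_range_succ, ← ih, h1, Finset.range_eq_Ico,
      ← Finset.sum_Ico_consecutive _ (Nat.zero_le (q * m)) (Nat.le_add_right _ m)]
    have h2 : ∑ l ∈ Finset.Ico (q * m) (q * m + m), f (l / m) = (m : ℝ) * f q := by
      rw [Finset.sum_congr rfl (fun l hl => ?_), Finset.sum_const, Nat.card_Ico,
        Nat.add_sub_cancel_left, nsmul_eq_mul]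
      · simp only [Finset.mem_Ico] at hl
        congr 1
        exact Nat.div_eq_of_lt_le hl.1 (by omega)
    rw [h2, Finset.range_eq_Ico]

private lemma chord_nonneg (D : ℕ → ℝ) (a b : ℕ)
    (hconc : ∀ i j : ℕ, a ≤ i → i ≤ j → j < b → D (j + 1) - D j ≤ D (i + 1) - D i)
    (ha : 0 ≤ D a) (hb : 0 ≤ D b) :
    ∀ j, a ≤ j → j ≤ b → 0 ≤ D j := by
  intro j haj hjb
  rcases eq_or_lt_of_le hjb with rfl | hjb
  · exact hb
  set c := D (j + 1) - D j with hc
  have key1 : (j - a : ℕ) • c ≤ D j - D a := by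
    have : D j - D a = ∑ l ∈ Finset.Ico a j, (D (l + 1) - D l) := by
      rw [Finset.sum_Ico_eq_sub _ haj, Finset.sum_range_sub, Finset.sum_range_sub]; ring
    rw [this]
    have := Finset.card_nsmul_le_sum (Finset.Ico a j) (fun l => D (l + 1) - D l) c
      (fun l hl => by
        simp only [Finset.mem_Ico] at hl
        exact hconc l j hl.1 (le_of_lt hl.2) hjb)
    simpa [Nat.card_Ico] using this
  have key2 : D b - D j ≤ (b - j : ℕ) • c := by
    have : D b - D j = ∑ l ∈ Finset.Ico j b, (D (l + 1) - D l) := by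
      rw [Finset.sum_Ico_eq_sub _ (le_of_lt hjb), Finset.sum_range_sub, Finset.sum_range_sub]; ring
    rw [this]
    have := Finset.sum_le_card_nsmul (Finset.Ico j b) (fun l => D (l + 1) - D l) c
      (fun l hl => by
        simp only [Finset.mem_Ico] at hl
        exact hconc j l haj hl.1 hl.2)
    simpa [Nat.card_Ico] using this
  rcases le_or_gt 0 c with h0 | h0
  · have : (0:ℝ) ≤ (j - a : ℕ) • c := nsmul_nonneg h0 _
    linarith [key1, ha]
  · have : ((b - j : ℕ) : ℝ) • c ≤ 0 := by
      rw [smul_eq_mul]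
      exact mul_nonpos_of_nonneg_of_nonpos (Nat.cast_nonneg _) (le_of_lt h0)
    rw [nsmul_eq_mul] at key2
    rw [smul_eq_mul] at this
    linarith [key2, hb]

private lemma key (m n : ℕ) (hm : 2 ≤ m) (hmn : m ∣ n) (hn : 0 < n)
    (ω ω' : Fin (n * m) → ℝ) (hf : FeasiblePair m (n * m) ω ω')
    (he : (1/2 : ℝ) * ∑ i, |ω i - ω' i| < 1) :
    ∃ τ τ' : Fin n → ℝ, FeasiblePair m n τ τ' ∧
      (1/2 : ℝ) * ∑ i, |τ i - τ' i| ≤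
        ((1/2 : ℝ) * ∑ i, |ω i - ω' i|) / (1 - (1/2 : ℝ) * ∑ i, |ω i - ω' i|) := by
  classical
  obtain ⟨hΩ0, hΩ'0, hΩs, hΩ's, hΩa, hΩ'a, hmaj⟩ := hf
  -- basic numerics
  have hm0 : 0 < m := by omega
  have hmR : (m : ℝ) ≠ 0 := by positivity
  have hq : n / m * m = n := Nat.div_mul_cancel hmn
  have hdn : n / m ≤ n := Nat.div_le_self n m
  have hnN : n ≤ (n * m) := Nat.le_mul_of_pos_right n hm0
  have hNNm : (n * m) ≤ (n * m) * m := Nat.le_mul_of_pos_right (n * m) hm0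
  -- ℕ-indexed versions
  set w : ℕ → ℝ := fun l => if h : l < (n * m) then ω ⟨l, h⟩ else 0 with hwdef
  set w' : ℕ → ℝ := fun l => if h : l < (n * m) then ω' ⟨l, h⟩ else 0 with hw'def
  have hw0 : ∀ l, 0 ≤ w l := by
    intro l; by_cases h : l < (n * m) <;> simp [hwdef, h, hΩ0]
  have hw'0 : ∀ l, 0 ≤ w' l := by
    intro l; by_cases h : l < (n * m) <;> simp [hw'def, h, hΩ'0]
  have hwA : ∀ i j : ℕ, i ≤ j → w j ≤ w i := by
    intro i j hij
    by_cases hj : j < (n * m)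
    · have hi : i < (n * m) := lt_of_le_of_lt hij hj
      simpa [hwdef, hi, hj] using hΩa ⟨i, hi⟩ ⟨j, hj⟩ hij
    · simp only [hwdef, dif_neg hj]
      exact hw0 i
  have hw'A : ∀ i j : ℕ, i ≤ j → w' j ≤ w' i := by
    intro i j hij
    by_cases hj : j < (n * m)
    · have hi : i < (n * m) := lt_of_le_of_lt hij hj
      simpa [hw'def, hi, hj] using hΩ'a ⟨i, hi⟩ ⟨j, hj⟩ hij
    · simp only [hw'def, dif_neg hj]
      exact hw'0 i
  have hsumw : ∑ l ∈ Finset.range (n * m), w l = 1 := by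
    rw [← Fin.sum_univ_eq_sum_range w (n * m), ← hΩs]
    exact Finset.sum_congr rfl fun i _ => by simp [hwdef, i.isLt]
  have hsumw' : ∑ l ∈ Finset.range (n * m), w' l = 1 := by
    rw [← Fin.sum_univ_eq_sum_range w' (n * m), ← hΩ's]
    exact Finset.sum_congr rfl fun i _ => by simp [hw'def, i.isLt]
  -- partial sums
  set G : ℕ → ℝ := fun j => ∑ l ∈ Finset.range j, w (l / m) / m with hGdef
  set S' : ℕ → ℝ := fun j => ∑ l ∈ Finset.range j, w' l with hS'def
  have hmaj' : ∀ k, k ≤ (n * m) * m → S' k ≤ G k := by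
    intro k hk
    have h1 := hmaj k hk
    have hL : (∑ l ∈ Finset.range k, if h : l < (n * m) then ω' ⟨l, h⟩ else 0) = S' k := rfl
    have hR : (∑ l ∈ Finset.range k, if h : l / m < (n * m) then ω ⟨l / m, h⟩ / m else 0) = G k := by
      refine Finset.sum_congr rfl fun l _ => ?_
      by_cases h : l / m < (n * m)
      · simp [hwdef, h]
      · simp [hwdef, h]
    rw [hL, hR] at h1
    exact h1
  have hGblock : ∀ q, G (q * m) = ∑ t ∈ Finset.range q, w t := by
    intro q
    have := sum_div_blocks m q hm0 (fun t => w t / m)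
    rw [hGdef]
    simp only at this ⊢
    rw [this]
    refine Finset.sum_congr rfl fun t _ => ?_
    field_simp
  have hGn : G n = ∑ t ∈ Finset.range (n / m), w t := by
    conv_lhs => rw [← hq]
    exact hGblock (n / m)
  have hGN : G (n * m) = ∑ t ∈ Finset.range n, w t := hGblock n
  have hSn1 : ∑ t ∈ Finset.range n, w t = 1 := by
    have h1 : (1 : ℝ) ≤ ∑ t ∈ Finset.range n, w t := by
      have h2 := hmaj' (n * m) hNNm
      rw [← hGN]
      rw [hS'def] at h2
      simp only at h2
      rw [hsumw'] at h2
      exact h2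
    have h2 : ∑ t ∈ Finset.range n, w t ≤ 1 := by
      rw [← hsumw]
      exact Finset.sum_le_sum_of_subset_of_nonneg (Finset.range_subset_range.2 hnN)
        (fun i _ _ => hw0 i)
    linarith
  have hwz : ∀ l, n ≤ l → w l = 0 := by
    intro l hl
    by_cases hlN : l < n * m
    · have hzero : ∑ s ∈ Finset.Ico n (n * m), w s = 0 := by
        have h3 : ∑ s ∈ Finset.range n, w s + ∑ s ∈ Finset.Ico n (n * m), w s = 1 := by
          rw [← hsumw, Finset.range_eq_Ico, Finset.range_eq_Ico]
          exact Finset.sum_Ico_consecutive _ (Nat.zero_le n) hnN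
        linarith [hSn1]
      exact (Finset.sum_eq_zero_iff_of_nonneg (fun i _ => hw0 i)).1 hzero l
        (Finset.mem_Ico.2 ⟨hl, hlN⟩)
    · simp [hwdef, hlN]
  have hAeq : ∑ l ∈ Finset.range (n * m), |w l - w' l| = ∑ i, |ω i - ω' i| := by
    rw [← Fin.sum_univ_eq_sum_range (fun l => |w l - w' l|) (n * m)]
    exact Finset.sum_congr rfl fun i _ => by simp [hwdef, hw'def, i.isLt]
  set e : ℝ := (1 / 2 : ℝ) * ∑ i, |ω i - ω' i| with hedef
  have he0 : 0 ≤ e := by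
    rw [hedef]
    have : (0:ℝ) ≤ ∑ i, |ω i - ω' i| := Finset.sum_nonneg fun i _ => abs_nonneg _
    linarith
  have hsplitN : ∀ f : ℕ → ℝ, ∑ l ∈ Finset.range (n * m), f l
      = ∑ l ∈ Finset.range n, f l + ∑ l ∈ Finset.Ico n (n * m), f l := by
    intro f
    rw [Finset.range_eq_Ico, Finset.range_eq_Ico]
    exact (Finset.sum_Ico_consecutive _ (Nat.zero_le n) hnN).symm
  have hS'n : 1 - e ≤ S' n := by
    have h1 : ∑ l ∈ Finset.range n, (w l - w' l) ≤ ∑ l ∈ Finset.range n, |w l - w' l| :=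
      Finset.sum_le_sum fun l _ => le_abs_self _
    have h2 : -∑ l ∈ Finset.Ico n (n * m), (w l - w' l)
        ≤ ∑ l ∈ Finset.Ico n (n * m), |w l - w' l| := by
      rw [← Finset.sum_neg_distrib]
      exact Finset.sum_le_sum fun l _ => neg_le_abs _
    have h3 : ∑ l ∈ Finset.range n, |w l - w' l| + ∑ l ∈ Finset.Ico n (n * m), |w l - w' l|
        = 2 * e := by
      rw [← hsplitN, hAeq, hedef]; ring
    have h4 : ∑ l ∈ Finset.range n, (w l - w' l) + ∑ l ∈ Finset.Ico n (n * m), (w l - w' l)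
        = 0 := by
      rw [← hsplitN, Finset.sum_sub_distrib, hsumw, hsumw']; ring
    have h5 : ∑ l ∈ Finset.range n, (w l - w' l) = 1 - S' n := by
      rw [Finset.sum_sub_distrib, hSn1, hS'def]
    linarith
  have hS'nG : S' n ≤ G n := hmaj' n (le_trans hnN hNNm)
  have hβ1 : 1 - e ≤ G n := le_trans hS'n hS'nG
  have hβ0 : 0 < G n := lt_of_lt_of_le (by linarith) hβ1
  set β : ℝ := G n with hβdef
  -- water level μ
  have hcont : Continuous (fun x : ℝ => ∑ l ∈ Finset.range n, max (w' l) x) :=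
    continuous_finset_sum _ fun l _ => continuous_const.max continuous_id
  have hh0 : ∑ l ∈ Finset.range n, max (w' l) 0 = S' n :=
    Finset.sum_congr rfl fun l _ => max_eq_left (hw'0 l)
  have hhβ : β ≤ ∑ l ∈ Finset.range n, max (w' l) β := by
    have h1 : (Finset.range n).card • β ≤ ∑ l ∈ Finset.range n, max (w' l) β :=
      Finset.card_nsmul_le_sum _ _ _ fun l _ => le_max_right _ _
    rw [Finset.card_range, nsmul_eq_mul] at h1
    have h2 : (1:ℝ) ≤ (n:ℝ) := by exact_mod_cast hn
    nlinarith [hβ0]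
  have hmem : β ∈ Set.Icc ((fun x : ℝ => ∑ l ∈ Finset.range n, max (w' l) x) 0)
      ((fun x : ℝ => ∑ l ∈ Finset.range n, max (w' l) x) β) := by
    constructor
    · simp only [hh0]; exact hS'nG
    · exact hhβ
  obtain ⟨μ, hμmem, hμ⟩ := intermediate_value_Icc (le_of_lt hβ0) hcont.continuousOn hmem
  have hμ0 : 0 ≤ μ := hμmem.1
  set H : ℕ → ℝ := fun j => ∑ l ∈ Finset.range j, max (w' l) μ with hHdef
  have hHn : H n = β := hμ
  -- the core inequality
  have hcore : ∀ j, j ≤ n → H j ≤ G j := by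
    have hP0 : H 0 = S' 0 := by simp [hHdef, hS'def]
    set t0 := Nat.findGreatest (fun s => H s = S' s) n with ht0def
    have ht0n : t0 ≤ n := Nat.findGreatest_le n
    have ht0spec : H t0 = S' t0 := by
      rw [ht0def]
      exact Nat.findGreatest_spec (P := fun s => H s = S' s) (Nat.zero_le n) hP0
    have hterm : ∀ l, l < t0 → max (w' l) μ = w' l := by
      intro l hl
      have hzero : ∑ s ∈ Finset.range t0, (max (w' s) μ - w' s) = 0 := by
        rw [Finset.sum_sub_distrib]
        have h6 : H t0 - S' t0 = 0 := by rw [ht0spec]; ring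
        simpa [hHdef, hS'def] using h6
      have h2 := (Finset.sum_eq_zero_iff_of_nonneg
        (fun i _ => sub_nonneg.2 (le_max_left (w' i) μ))).1 hzero l (Finset.mem_range.2 hl)
      linarith [h2]
    intro j hjn
    rcases le_or_gt j t0 with hj | hj
    · have hHj : H j = S' j := by
        rw [hHdef, hS'def]
        exact Finset.sum_congr rfl fun l hl =>
          hterm l (lt_of_lt_of_le (Finset.mem_range.1 hl) hj)
      rw [hHj]
      refine hmaj' j ?_
      have : j ≤ n * m := le_trans hjn hnN
      exact le_trans this hNNm
    · have ht0ltn : t0 < n := lt_of_lt_of_le hj hjn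
      have hw't0 : w' t0 < μ := by
        have hng : ¬ (H (t0 + 1) = S' (t0 + 1)) :=
          Nat.findGreatest_is_greatest (P := fun s => H s = S' s) (n := n) (k := t0 + 1)
            (by rw [← ht0def]; omega) (by omega)
        by_contra hge
        push_neg at hge
        apply hng
        rw [hHdef, hS'def]
        simp only
        rw [Finset.sum_range_succ, Finset.sum_range_succ, max_eq_left hge]
        have h7 : (∑ l ∈ Finset.range t0, max (w' l) μ) = ∑ l ∈ Finset.range t0, w' l :=
          ht0spec
        rw [h7]
      have hmaxr : ∀ l, t0 ≤ l → max (w' l) μ = μ :=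
        fun l hl => max_eq_right (le_of_lt (lt_of_le_of_lt (hw'A t0 l hl) hw't0))
      have hHlin : ∀ s, t0 ≤ s → H s = S' t0 + ((s - t0 : ℕ) : ℝ) * μ := by
        intro s hs
        have h1 : H s = H t0 + ∑ l ∈ Finset.Ico t0 s, max (w' l) μ := by
          rw [hHdef]
          simp only
          rw [Finset.range_eq_Ico, ← Finset.sum_Ico_consecutive _ (Nat.zero_le t0) hs,
            ← Finset.range_eq_Ico]
        rw [h1, ht0spec]
        congr 1
        rw [Finset.sum_congr rfl (fun l hl => hmaxr l (Finset.mem_Ico.1 hl).1),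
          Finset.sum_const, Nat.card_Ico, nsmul_eq_mul]
      have hDconc : ∀ i s : ℕ, t0 ≤ i → i ≤ s → s < n →
          (G (s+1) - (S' t0 + (((s+1) - t0 : ℕ) : ℝ) * μ))
            - (G s - (S' t0 + ((s - t0 : ℕ) : ℝ) * μ))
          ≤ (G (i+1) - (S' t0 + (((i+1) - t0 : ℕ) : ℝ) * μ))
            - (G i - (S' t0 + ((i - t0 : ℕ) : ℝ) * μ)) := by
        intro i s hti his hsn
        have hGi : G (i+1) - G i = w (i / m) / m := by
          rw [hGdef]; simp only; rw [Finset.sum_range_succ]; ring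
        have hGs : G (s+1) - G s = w (s / m) / m := by
          rw [hGdef]; simp only; rw [Finset.sum_range_succ]; ring
        have hci : (((i+1) - t0 : ℕ) : ℝ) = ((i - t0 : ℕ) : ℝ) + 1 := by
          have h8 : (i + 1) - t0 = (i - t0) + 1 := by omega
          rw [h8]; push_cast; ring
        have hcs : (((s+1) - t0 : ℕ) : ℝ) = ((s - t0 : ℕ) : ℝ) + 1 := by
          have h8 : (s + 1) - t0 = (s - t0) + 1 := by omega
          rw [h8]; push_cast; ring
        have hmpos : (0:ℝ) < m := by positivity
        have hws : w (s / m) / m ≤ w (i / m) / m :=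
          (div_le_div_iff_of_pos_right hmpos).2 (hwA _ _ (Nat.div_le_div_right his))
        rw [hci, hcs]
        linarith [hGi, hGs, hws]
      have hDa : 0 ≤ G t0 - (S' t0 + ((t0 - t0 : ℕ) : ℝ) * μ) := by
        have h9 : S' t0 ≤ G t0 := by
          refine hmaj' t0 ?_
          have : t0 ≤ n * m := le_trans ht0n hnN
          exact le_trans this hNNm
        simp only [Nat.sub_self, Nat.cast_zero]
        linarith
      have hDb : 0 ≤ G n - (S' t0 + ((n - t0 : ℕ) : ℝ) * μ) := by
        have h1 : H n = S' t0 + ((n - t0 : ℕ) : ℝ) * μ := hHlin n ht0n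
        rw [hHn] at h1
        rw [← h1]
        simp [hβdef]
      have hDj := chord_nonneg
        (fun s => G s - (S' t0 + ((s - t0 : ℕ) : ℝ) * μ)) t0 n hDconc hDa hDb
        j (le_of_lt hj) hjn
      have h2 : H j = S' t0 + ((j - t0 : ℕ) : ℝ) * μ := hHlin j (le_of_lt hj)
      linarith
  -- the new pair
  set t : ℕ → ℝ := fun l => if l < n / m then w l / β else 0 with htdef
  set t' : ℕ → ℝ := fun l => if l < n then max (w' l) μ / β else 0 with ht'def
  refine ⟨fun i => t i, fun i => t' i, ⟨?_, ?_, ?_, ?_, ?_, ?_, ?_⟩, ?_⟩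
  · intro i
    simp only [htdef]
    split_ifs with h
    · exact div_nonneg (hw0 _) hβ0.le
    · exact le_refl 0
  · intro i
    simp only [ht'def]
    split_ifs with h
    · exact div_nonneg (le_trans (hw'0 _) (le_max_left _ _)) hβ0.le
    · exact le_refl 0
  · rw [Fin.sum_univ_eq_sum_range t n]
    have h1 : ∑ l ∈ Finset.range n, t l = ∑ l ∈ Finset.range (n / m), t l := by
      symm
      apply Finset.sum_subset (Finset.range_subset_range.2 hdn)
      intro x _ hx
      rw [htdef]
      simp only
      rw [if_neg (by simpa [Finset.mem_range] using hx)]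
    have h2 : ∑ l ∈ Finset.range (n / m), t l = (∑ l ∈ Finset.range (n / m), w l) / β := by
      calc ∑ l ∈ Finset.range (n / m), t l = ∑ l ∈ Finset.range (n / m), w l / β :=
            Finset.sum_congr rfl fun l hl => by
              rw [htdef]; simp only; rw [if_pos (Finset.mem_range.1 hl)]
        _ = (∑ l ∈ Finset.range (n / m), w l) / β := by rw [Finset.sum_div]
    rw [h1, h2, ← hGn, div_self (ne_of_gt hβ0)]
  · rw [Fin.sum_univ_eq_sum_range t' n]
    have h2 : ∑ l ∈ Finset.range n, t' l = H n / β := by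
      calc ∑ l ∈ Finset.range n, t' l = ∑ l ∈ Finset.range n, max (w' l) μ / β :=
            Finset.sum_congr rfl fun l hl => by
              rw [ht'def]; simp only; rw [if_pos (Finset.mem_range.1 hl)]
        _ = (∑ l ∈ Finset.range n, max (w' l) μ) / β := by rw [Finset.sum_div]
        _ = H n / β := rfl
    rw [h2, hHn, div_self (ne_of_gt hβ0)]
  · intro i j hij
    have hij' : (i : ℕ) ≤ (j : ℕ) := hij
    simp only [htdef]
    by_cases hj : (j : ℕ) < n / m
    · rw [if_pos hj, if_pos (lt_of_le_of_lt hij' hj)]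
      exact (div_le_div_iff_of_pos_right hβ0).2 (hwA _ _ hij')
    · rw [if_neg hj]
      split_ifs with h
      · exact div_nonneg (hw0 _) hβ0.le
      · exact le_refl 0
  · intro i j hij
    have hij' : (i : ℕ) ≤ (j : ℕ) := hij
    simp only [ht'def]
    by_cases hj : (j : ℕ) < n
    · rw [if_pos hj, if_pos (lt_of_le_of_lt hij' hj)]
      have hmm : max (w' (j:ℕ)) μ ≤ max (w' (i:ℕ)) μ := max_le_max (hw'A _ _ hij') le_rfl
      exact (div_le_div_iff_of_pos_right hβ0).2 hmm
    · rw [if_neg hj]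
      split_ifs with h
      · exact div_nonneg (le_trans (hw'0 _) (le_max_left _ _)) hβ0.le
      · exact le_refl 0
  · -- majorization for the new pair
    intro k hk
    have hjn : min k n ≤ n := min_le_right k n
    have hL : (∑ l ∈ Finset.range k, if h : l < n then t' l else 0)
        = H (min k n) / β := by
      have h1 : (∑ l ∈ Finset.range k, if h : l < n then t' l else 0)
          = ∑ l ∈ Finset.range k, t' l := by
        refine Finset.sum_congr rfl fun l _ => ?_
        by_cases h : l < n
        · rw [dif_pos h]
        · rw [dif_neg h, ht'def]; simp only; rw [if_neg h]
      have h2 : ∑ l ∈ Finset.range k, t' l = ∑ l ∈ Finset.range (min k n), t' l := by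
        symm
        apply Finset.sum_subset (Finset.range_subset_range.2 (min_le_left k n))
        intro x hx1 hx2
        rw [Finset.mem_range] at hx1 hx2
        rw [ht'def]; simp only; rw [if_neg (by omega)]
      have h3 : ∑ l ∈ Finset.range (min k n), t' l = H (min k n) / β := by
        calc ∑ l ∈ Finset.range (min k n), t' l
            = ∑ l ∈ Finset.range (min k n), max (w' l) μ / β :=
              Finset.sum_congr rfl fun l hl => by
                rw [ht'def]; simp only
                rw [if_pos (lt_of_lt_of_le (Finset.mem_range.1 hl) hjn)]
          _ = (∑ l ∈ Finset.range (min k n), max (w' l) μ) / β := by rw [Finset.sum_div]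
          _ = H (min k n) / β := rfl
      rw [h1, h2, h3]
    have hR : (∑ l ∈ Finset.range k, if h : l / m < n then t (l / m) / m else 0)
        = G (min k n) / β := by
      have h1 : (∑ l ∈ Finset.range k, if h : l / m < n then t (l / m) / m else 0)
          = ∑ l ∈ Finset.range k, t (l / m) / m := by
        refine Finset.sum_congr rfl fun l _ => ?_
        by_cases h : l / m < n
        · rw [dif_pos h]
        · rw [dif_neg h, htdef]; simp only
          rw [if_neg (Nat.not_lt.2 (le_trans hdn (Nat.not_lt.1 h))), zero_div]
      have h2 : ∑ l ∈ Finset.range k, t (l / m) / m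
          = ∑ l ∈ Finset.range (min k n), t (l / m) / m := by
        symm
        apply Finset.sum_subset (Finset.range_subset_range.2 (min_le_left k n))
        intro x hx1 hx2
        rw [Finset.mem_range] at hx1 hx2
        have hxn : n ≤ x := by omega
        have hdd : n / m ≤ x / m := Nat.div_le_div_right hxn
        rw [htdef]; simp only
        rw [if_neg (Nat.not_lt.2 hdd), zero_div]
      have h3 : ∑ l ∈ Finset.range (min k n), t (l / m) / m = G (min k n) / β := by
        calc ∑ l ∈ Finset.range (min k n), t (l / m) / m
            = ∑ l ∈ Finset.range (min k n), w (l / m) / m / β :=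
              Finset.sum_congr rfl fun l hl => by
                have hln : l < n := lt_of_lt_of_le (Finset.mem_range.1 hl) hjn
                have hdd : l / m < n / m := Nat.div_lt_div_of_lt_of_dvd hmn hln
                rw [htdef]; simp only
                rw [if_pos hdd, div_div, div_div, mul_comm β (m:ℝ)]
          _ = (∑ l ∈ Finset.range (min k n), w (l / m) / m) / β := by rw [Finset.sum_div]
          _ = G (min k n) / β := rfl
      rw [h1, h2, h3]
    rw [hL, hR]
    exact (div_le_div_iff_of_pos_right hβ0).2 (hcore (min k n) hjn)
  · -- distance bound
    have hsplitn : ∀ f : ℕ → ℝ, ∑ l ∈ Finset.range n, f l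
        = ∑ l ∈ Finset.range (n / m), f l + ∑ l ∈ Finset.Ico (n / m) n, f l := by
      intro f
      rw [Finset.range_eq_Ico, Finset.range_eq_Ico]
      exact (Finset.sum_Ico_consecutive _ (Nat.zero_le _) hdn).symm
    have hb1 : ∑ l ∈ Finset.range (n / m), |t l - t' l|
        ≤ ∑ l ∈ Finset.range (n / m), (|w l - w' l| + (max (w' l) μ - w' l)) / β := by
      refine Finset.sum_le_sum fun l hl => ?_
      have hl1 : l < n / m := Finset.mem_range.1 hl
      have hl2 : l < n := lt_of_lt_of_le hl1 hdn
      rw [htdef, ht'def]; simp only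
      rw [if_pos hl1, if_pos hl2, div_sub_div_same, abs_div, abs_of_pos hβ0]
      refine (div_le_div_iff_of_pos_right hβ0).2 ?_
      have h1 : |w l - max (w' l) μ| ≤ |w l - w' l| + |w' l - max (w' l) μ| :=
        abs_sub_le _ _ _
      have h2 : |w' l - max (w' l) μ| = max (w' l) μ - w' l := by
        rw [abs_sub_comm]
        exact abs_of_nonneg (sub_nonneg.2 (le_max_left _ _))
      linarith
    have hb2 : ∑ l ∈ Finset.Ico (n / m) n, |t l - t' l|
        ≤ ∑ l ∈ Finset.Ico (n / m) n, (w l + |w l - w' l| + (max (w' l) μ - w' l)) / β := by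
      refine Finset.sum_le_sum fun l hl => ?_
      obtain ⟨hl1, hl2⟩ := Finset.mem_Ico.1 hl
      rw [htdef, ht'def]; simp only
      rw [if_neg (by omega), if_pos hl2, zero_sub, abs_neg, abs_div, abs_of_pos hβ0]
      refine (div_le_div_iff_of_pos_right hβ0).2 ?_
      have h1 : w' l - w l ≤ |w l - w' l| := by
        rw [abs_sub_comm]; exact le_abs_self _
      have h2 : 0 ≤ max (w' l) μ := le_trans (hw'0 l) (le_max_left _ _)
      rw [abs_of_nonneg h2]
      linarith
    have hIcow : ∑ l ∈ Finset.Ico (n / m) n, w l = 1 - β := by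
      have h0 := hsplitn w
      rw [hSn1] at h0
      have hβw : ∑ l ∈ Finset.range (n / m), w l = β := hGn.symm
      linarith
    have hmaxsum : ∑ l ∈ Finset.range n, (max (w' l) μ - w' l) = β - S' n := by
      rw [Finset.sum_sub_distrib]
      have h1 : (∑ l ∈ Finset.range n, max (w' l) μ) = β := hHn
      rw [h1]
    have hA2 : ∑ l ∈ Finset.Ico n (n * m), |w l - w' l| = 1 - S' n := by
      have h1 : ∑ l ∈ Finset.Ico n (n * m), |w l - w' l|
          = ∑ l ∈ Finset.Ico n (n * m), w' l := by
        refine Finset.sum_congr rfl fun l hl => ?_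
        obtain ⟨hl1, _⟩ := Finset.mem_Ico.1 hl
        rw [hwz l hl1, zero_sub, abs_neg, abs_of_nonneg (hw'0 l)]
      have h2 := hsplitN w'
      rw [hsumw'] at h2
      rw [h1]
      have h3 : S' n = ∑ l ∈ Finset.range n, w' l := rfl
      linarith
    have hA1 : ∑ l ∈ Finset.range n, |w l - w' l| = 2 * e - (1 - S' n) := by
      have h2 := hsplitN (fun l => |w l - w' l|)
      rw [hAeq, hA2] at h2
      rw [hedef]
      linarith
    have htot : ∑ l ∈ Finset.range n, |t l - t' l| ≤ 2 * e / β := by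
      have h0 := hsplitn (fun l => |t l - t' l|)
      have hsum1 : ∑ l ∈ Finset.range (n / m), (|w l - w' l| + (max (w' l) μ - w' l)) / β
            + ∑ l ∈ Finset.Ico (n / m) n, (w l + |w l - w' l| + (max (w' l) μ - w' l)) / β
          = (∑ l ∈ Finset.range n, (|w l - w' l| + (max (w' l) μ - w' l))
            + ∑ l ∈ Finset.Ico (n / m) n, w l) / β := by
        have hI : ∑ l ∈ Finset.Ico (n / m) n, (w l + |w l - w' l| + (max (w' l) μ - w' l))
            = ∑ l ∈ Finset.Ico (n / m) n, (|w l - w' l| + (max (w' l) μ - w' l))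
              + ∑ l ∈ Finset.Ico (n / m) n, w l := by
          rw [← Finset.sum_add_distrib]
          exact Finset.sum_congr rfl fun l _ => by ring
        rw [hsplitn (fun l => (|w l - w' l| + (max (w' l) μ - w' l))),
          ← Finset.sum_div, ← Finset.sum_div, hI]
        ring
      have hval : ∑ l ∈ Finset.range n, (|w l - w' l| + (max (w' l) μ - w' l))
            + ∑ l ∈ Finset.Ico (n / m) n, w l = 2 * e := by
        rw [Finset.sum_add_distrib, hA1, hmaxsum, hIcow]
        ring
      rw [h0]
      calc ∑ l ∈ Finset.range (n / m), |t l - t' l| + ∑ l ∈ Finset.Ico (n / m) n, |t l - t' l|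
          ≤ ∑ l ∈ Finset.range (n / m), (|w l - w' l| + (max (w' l) μ - w' l)) / β
            + ∑ l ∈ Finset.Ico (n / m) n, (w l + |w l - w' l| + (max (w' l) μ - w' l)) / β :=
            add_le_add hb1 hb2
        _ = 2 * e / β := by rw [hsum1, hval]
    have hfin : (1/2 : ℝ) * ∑ l ∈ Finset.range n, |t l - t' l| ≤ e / β := by
      have h9 : 2 * e / β = 2 * (e / β) := by ring
      linarith [htot, h9]
    have hfin2 : e / β ≤ e / (1 - e) :=
      div_le_div_of_nonneg_left he0 (by linarith) hβ1
    calc (1/2 : ℝ) * ∑ i : Fin n, |t (i:ℕ) - t' (i:ℕ)|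
        = (1/2 : ℝ) * ∑ l ∈ Finset.range n, |t l - t' l| := by
          rw [Fin.sum_univ_eq_sum_range (fun l => |t l - t' l|) n]
      _ ≤ e / β := hfin
      _ ≤ e / (1 - e) := hfin2

/-- `dOpt m n` is the infimum of the trace distance `(1/2)·∑ |ω i − ω' i|`
over all feasible catalyst pairs `(ω, ω')` in dimension `n`. -/
noncomputable def dOpt (m n : ℕ) : ℝ :=
  sInf {d : ℝ | ∃ ω ω' : Fin n → ℝ, FeasiblePair m n ω ω' ∧
    d = (1 / 2) * ∑ i, |ω i - ω' i|}

private lemma sum_indicator_min (k c : ℕ) (x : ℝ) :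
    ∑ l ∈ Finset.range k, (if l < c then x else 0) = (min k c : ℕ) * x := by
  have h1 : ∑ l ∈ Finset.range k, (if l < c then x else 0)
      = ∑ l ∈ Finset.range (min k c), (if l < c then x else 0) := by
    symm
    apply Finset.sum_subset (Finset.range_subset_range.2 (min_le_left k c))
    intro y hy1 hy2
    rw [Finset.mem_range] at hy1 hy2
    rw [if_neg (by omega)]
  rw [h1, Finset.sum_congr rfl (fun l hl => if_pos ?_), Finset.sum_const,
    Finset.card_range, nsmul_eq_mul]
  exact lt_of_lt_of_le (Finset.mem_range.1 hl) (min_le_right k c)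

private lemma dOpt_set_nonempty (m K : ℕ) (hm : 2 ≤ m) (hK : m ≤ K) :
    ∃ d : ℝ, ∃ ω ω' : Fin K → ℝ, FeasiblePair m K ω ω' ∧
      d = (1 / 2) * ∑ i, |ω i - ω' i| := by
  have hK0 : 0 < K := by omega
  have hm0 : 0 < m := by omega
  refine ⟨_, fun i => if (i : ℕ) < 1 then 1 else 0, fun _ => 1 / K,
    ⟨?_, ?_, ?_, ?_, ?_, ?_, ?_⟩, rfl⟩
  · intro i; dsimp only; split_ifs <;> norm_num
  · intro i; positivity
  · have h1 : ∀ i : Fin K, (if (i : ℕ) < 1 then (1:ℝ) else 0)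
        = (fun l : ℕ => if l < 1 then (1:ℝ) else 0) (i : ℕ) := fun i => rfl
    rw [Finset.sum_congr rfl fun i _ => h1 i,
      Fin.sum_univ_eq_sum_range (fun l : ℕ => if l < 1 then (1:ℝ) else 0) K,
      sum_indicator_min]
    have : min K 1 = 1 := by omega
    rw [this]; norm_num
  · rw [Finset.sum_const, Finset.card_univ, Fintype.card_fin, nsmul_eq_mul]
    field_simp
  · intro i j hij
    have hij' : (i : ℕ) ≤ (j : ℕ) := hij
    dsimp only
    split_ifs with h1 h2 h3
    · exact le_refl _
    · exact absurd (by omega : (i : ℕ) < 1) h2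
    · norm_num
    · norm_num
  · intro i j _; exact le_refl _
  · intro k hk
    have hL : (∑ l ∈ Finset.range k, if h : l < K then (1:ℝ) / K else 0)
        = (min k K : ℕ) * (1 / K) := by
      have h1 : ∀ l : ℕ, (if h : l < K then (1:ℝ) / K else 0)
          = (if l < K then (1:ℝ) / K else 0) := by
        intro l
        by_cases h : l < K
        · rw [dif_pos h, if_pos h]
        · rw [dif_neg h, if_neg h]
      rw [Finset.sum_congr rfl (fun l _ => h1 l), sum_indicator_min]
    have hR : (∑ l ∈ Finset.range k,
          if h : l / m < K then
            (if ((⟨l / m, h⟩ : Fin K) : ℕ) < 1 then (1:ℝ) else 0) / m else 0)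
        = (min k m : ℕ) * (1 / m) := by
      have h1 : ∀ l : ℕ, l < k → (if h : l / m < K then
            (if ((⟨l / m, h⟩ : Fin K) : ℕ) < 1 then (1:ℝ) else 0) / m else 0)
          = (if l < m then (1:ℝ) / m else 0) := by
        intro l hlk
        have hlKm : l < K * m := lt_of_lt_of_le hlk hk
        have hlmK : l < m * K := by rwa [Nat.mul_comm] at hlKm
        have hdiv : l / m < K := Nat.div_lt_of_lt_mul hlmK
        rw [dif_pos hdiv]
        by_cases h : l < m
        · have h0 : l / m < 1 := by
            have := Nat.div_eq_of_lt h
            omega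
          rw [if_pos h0, if_pos h]
        · have h0 : ¬ l / m < 1 := by
            have h3 : 1 ≤ l / m := (Nat.one_le_div_iff (by omega)).2 (le_of_not_gt h)
            omega
          rw [if_neg h0, if_neg h, zero_div]
      rw [Finset.sum_congr rfl (fun l hl => h1 l (Finset.mem_range.1 hl)), sum_indicator_min]
    rw [hL, hR]
    rcases le_or_gt k m with h | h
    · have h1 : min k K = k := by omega
      have h2 : min k m = k := by omega
      rw [h1, h2, mul_one_div, mul_one_div]
      apply div_le_div_of_nonneg_left (by positivity) (by positivity)
      exact_mod_cast hK
    · have h2 : min k m = m := by omega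
      rw [h2, mul_one_div, mul_one_div, div_self (by positivity : (m:ℝ) ≠ 0)]
      apply div_le_one_of_le₀
      · exact_mod_cast min_le_right k K
      · positivity

/-- The inductive step: for `m ≥ 2` and `a ≥ 1`, with `n = m^a` and
`k = m^(a+1)`, one has `d_{m,k} ≥ d_{m,n}/(1 + d_{m,n})`. -/
theorem catalyst_inductive_step (m a : ℕ) (hm : 2 ≤ m) (ha : 1 ≤ a) :
    dOpt m (m ^ a) / (1 + dOpt m (m ^ a)) ≤ dOpt m (m ^ (a + 1)) := by
  have hn0 : 0 < m ^ a := pow_pos (by omega) a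
  have hmn : m ∣ m ^ a := dvd_pow_self m (by omega)
  have hdn0 : 0 ≤ dOpt m (m ^ a) := by
    apply Real.sInf_nonneg
    rintro x ⟨ω, ω', _, rfl⟩
    have : (0:ℝ) ≤ ∑ i, |ω i - ω' i| := Finset.sum_nonneg fun i _ => abs_nonneg _
    linarith
  have hbdd : BddBelow {d : ℝ | ∃ ω ω' : Fin (m ^ a) → ℝ, FeasiblePair m (m ^ a) ω ω' ∧
      d = (1 / 2) * ∑ i, |ω i - ω' i|} := by
    refine ⟨0, ?_⟩
    rintro x ⟨ω, ω', _, rfl⟩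
    have : (0:ℝ) ≤ ∑ i, |ω i - ω' i| := Finset.sum_nonneg fun i _ => abs_nonneg _
    linarith
  rw [pow_succ m a]
  have hgoal : dOpt m (m ^ a) / (1 + dOpt m (m ^ a)) ≤
      sInf {d : ℝ | ∃ ω ω' : Fin (m ^ a * m) → ℝ, FeasiblePair m (m ^ a * m) ω ω' ∧
        d = (1 / 2) * ∑ i, |ω i - ω' i|} := by
    apply le_csInf
    · obtain ⟨d, hd⟩ := dOpt_set_nonempty m (m ^ a * m) hm
        (le_trans (Nat.le_mul_of_pos_left m hn0) le_rfl)
      exact ⟨d, hd⟩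
    · rintro d ⟨ω, ω', hfeas, rfl⟩
      set e : ℝ := (1 / 2) * ∑ i, |ω i - ω' i| with hedef
      have he0 : 0 ≤ e := by
        rw [hedef]
        have : (0:ℝ) ≤ ∑ i, |ω i - ω' i| := Finset.sum_nonneg fun i _ => abs_nonneg _
        linarith
      rcases lt_or_ge e 1 with he1 | he1
      · obtain ⟨τ, τ', hτfeas, hτd⟩ := key m (m ^ a) hm hmn hn0 ω ω' hfeas he1
        have hdn : dOpt m (m ^ a) ≤ e / (1 - e) := by
          refine le_trans (csInf_le hbdd ⟨τ, τ', hτfeas, rfl⟩) hτd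
        rw [div_le_iff₀ (by linarith)]
        have h1 : dOpt m (m ^ a) * (1 - e) ≤ e := by
          have := (le_div_iff₀ (by linarith : (0:ℝ) < 1 - e)).1 hdn
          linarith [this]
        nlinarith [hdn0, he0]
      · have h5 : dOpt m (m ^ a) / (1 + dOpt m (m ^ a)) ≤ 1 := by
          rw [div_le_one (by linarith)]
          linarith
        linarith
  exact hgoal
end

section
/- Let β > 0, let E^S : Fin m → ℝ (with m ≥ 1) be the system energy levels with maximum E^S_max and partition function Z_S = ∑_{i} e^{−β·E^S_i}, and let E^C : Fin n → ℝ (with n ≥ 1) be the catalyst energy levels with maximum E^C_max, partition function Z_C = ∑_{j} e^{−β·E^C_j}, and thermal probabilities τ_j = e^{−β·E^C_j}/Z_C. Let r : Fin n → ℝ satisfy 0 < r_j ≤ 1 for all j and ∑_j r_j = 1, and let ε̂ ≥ 0 satisfy max_i (r_i + ε̂)/τ_i ≥ (Z_S·e^{β·E^S_max})·max_j (r_j/τ_j). Then ε̂ ≥ (Z_S·e^{β·E^S_max} − 1)·e^{−β·E^C_max}/Z_C. -/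
/-- Bounded-dimension lower bound on the thermal embezzling error, forced by
monotonicity of the max-relative entropy `D_∞`. Given inverse temperature
`β > 0`, finite system energy levels `ES : Fin m → ℝ` with maximum `ESmax` and
partition function `ZS = ∑ e^{−β·ES i}`, and finite catalyst energy levels
`EC : Fin n → ℝ` with maximum `ECmax`, partition function `ZC` and Gibbs
probabilities `τ j = e^{−β·EC j}/ZC`: any probability distribution `r` with
`0 < r j ≤ 1` and any `ε̂ ≥ 0` with
`max_i (r i + ε̂)/τ i ≥ (ZS·e^{β·ESmax})·max_j r j/τ j` must satisfy
`ε̂ ≥ (ZS·e^{β·ESmax} − 1)·e^{−β·ECmax}/ZC`. -/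
theorem embezzling_error_bounded_dimension
    (β : ℝ) (hβ : 0 < β) (m n : ℕ) (hm : 0 < m) (hn : 0 < n)
    (ES : Fin m → ℝ) (EC : Fin n → ℝ) (ESmax ECmax : ℝ)
    (hESmax : IsGreatest (Set.range ES) ESmax)
    (hECmax : IsGreatest (Set.range EC) ECmax)
    (ZS ZC : ℝ)
    (hZS : ZS = ∑ i, Real.exp (-β * ES i))
    (hZC : ZC = ∑ j, Real.exp (-β * EC j))
    (τ : Fin n → ℝ) (hτ : ∀ j, τ j = Real.exp (-β * EC j) / ZC)
    (r : Fin n → ℝ) (hr : ∀ j, 0 < r j ∧ r j ≤ 1) (hrsum : ∑ j, r j = 1)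
    (ε : ℝ) (hε : 0 ≤ ε)
    (hmax :
      ZS * Real.exp (β * ESmax) *
          Finset.univ.sup' (Finset.univ_nonempty_iff.mpr (Fin.pos_iff_nonempty.mp hn))
            (fun j => r j / τ j) ≤
        Finset.univ.sup' (Finset.univ_nonempty_iff.mpr (Fin.pos_iff_nonempty.mp hn))
          (fun i => (r i + ε) / τ i)) :
    (ZS * Real.exp (β * ESmax) - 1) * Real.exp (-β * ECmax) / ZC ≤ ε := by
  have hne : (Finset.univ : Finset (Fin n)).Nonempty :=
    Finset.univ_nonempty_iff.mpr (Fin.pos_iff_nonempty.mp hn)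
  have hZCpos : 0 < ZC := by
    rw [hZC]; exact Finset.sum_pos (fun j _ => Real.exp_pos _) hne
  set τmin : ℝ := Real.exp (-β * ECmax) / ZC with hτmin
  have hτminpos : 0 < τmin := div_pos (Real.exp_pos _) hZCpos
  have hτpos : ∀ j, 0 < τ j := fun j => by
    rw [hτ j]; exact div_pos (Real.exp_pos _) hZCpos
  have hτge : ∀ j, τmin ≤ τ j := fun j => by
    rw [hτ j]
    exact (div_le_div_iff_of_pos_right hZCpos).mpr
      (Real.exp_le_exp.mpr (by nlinarith [hECmax.2 ⟨j, rfl⟩]))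
  set K : ℝ := ZS * Real.exp (β * ESmax) with hK
  have hK1 : 1 ≤ K := by
    obtain ⟨i0, hi0⟩ := hESmax.1
    have h1 : Real.exp (-β * ES i0) ≤ ZS := by
      rw [hZS]
      exact Finset.single_le_sum (f := fun i => Real.exp (-β * ES i)) (fun i _ => (Real.exp_pos _).le) (Finset.mem_univ i0)
    have := Real.exp_pos (β * ESmax)
    calc (1:ℝ) = Real.exp (-β * ES i0) * Real.exp (β * ES i0) := by
          rw [← Real.exp_add]; ring_nf; simp
      _ ≤ ZS * Real.exp (β * ESmax) := by
          apply mul_le_mul h1 (Real.exp_le_exp.mpr _) (Real.exp_pos _).le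
            (le_trans (Real.exp_pos _).le h1)
          rw [hi0]
  set M : ℝ := Finset.univ.sup' hne (fun j => r j / τ j) with hM
  have hτsum : ∑ j, τ j = 1 := by
    simp only [hτ, ← Finset.sum_div, ← hZC]
    field_simp
  have hM1 : 1 ≤ M := by
    by_contra h
    push_neg at h
    have : (1:ℝ) < 1 := by
      calc (1:ℝ) = ∑ j, r j := hrsum.symm
        _ ≤ ∑ j, M * τ j := by
            apply Finset.sum_le_sum
            intro j _
            have := Finset.le_sup' (fun j => r j / τ j) (Finset.mem_univ j)
            have := (div_le_iff₀ (hτpos j)).mp this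
            linarith
        _ = M := by rw [← Finset.mul_sum, hτsum, mul_one]
        _ < 1 := h
    linarith
  have hub : Finset.univ.sup' hne (fun i => (r i + ε) / τ i) ≤ M + ε / τmin := by
    apply Finset.sup'_le
    intro i _
    have h1 : r i / τ i ≤ M := Finset.le_sup' (fun j => r j / τ j) (Finset.mem_univ i)
    have h2 : ε / τ i ≤ ε / τmin := div_le_div_of_nonneg_left hε hτminpos (hτge i)
    calc (r i + ε) / τ i = r i / τ i + ε / τ i := add_div _ _ _
      _ ≤ M + ε / τmin := add_le_add h1 h2
  have key : K * M ≤ M + ε / τmin := le_trans hmax hub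
  have hKM : (K - 1) ≤ ε / τmin := by nlinarith
  have final : (K - 1) * τmin ≤ ε := by
    calc (K - 1) * τmin ≤ (ε / τmin) * τmin :=
          mul_le_mul_of_nonneg_right hKM hτminpos.le
      _ = ε := div_mul_cancel₀ ε hτminpos.ne'
  calc (ZS * Real.exp (β * ESmax) - 1) * Real.exp (-β * ECmax) / ZC
      = (K - 1) * τmin := by rw [hτmin, hK]; ring
    _ ≤ ε := final
end

section
/- Let β > 0, let E^C : Fin n → ℝ (with n ≥ 1) be catalyst energy levels with maximum E^C_max, partition function Z_C = ∑_j e^{−β·E^C_j}, and thermal probabilities τ_j = e^{−β·E^C_j}/Z_C, and let A ≥ 1 be a real number. Suppose ω, ω' : Fin n → ℝ are probability distributions (nonnegative entries summing to 1, with ω'_j > 0 for all j) satisfying max_i (ω_i/τ_i) ≥ A·max_j (ω'_j/τ_j). Then the trace distance satisfies (1/2)·∑_j |ω_j − ω'_j| ≥ (A − 1)·e^{−β·E^C_max}/Z_C. -/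
/-- Abstract form of the bounded-dimension embezzling bound. Given inverse
temperature `β > 0`, catalyst energy levels `EC : Fin n → ℝ` with maximum
`ECmax`, partition function `ZC = ∑ e^{−β·EC j}` and Gibbs probabilities
`τ j = e^{−β·EC j}/ZC`, and a constant `A ≥ 1`: if probability distributions
`ω, ω'` (with `ω' j > 0` for all `j`) satisfy the `D_∞`-monotonicity constraint
`max_i ω i/τ i ≥ A · max_j ω' j/τ j`, then the trace distance obeys
`(1/2)·∑ |ω j − ω' j| ≥ (A − 1)·e^{−β·ECmax}/ZC`. -/
theorem embezzling_error_Dinfty_bound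
    (β : ℝ) (hβ : 0 < β) (n : ℕ) (hn : 0 < n)
    (EC : Fin n → ℝ) (ECmax : ℝ)
    (hECmax : IsGreatest (Set.range EC) ECmax)
    (ZC : ℝ) (hZC : ZC = ∑ j, Real.exp (-β * EC j))
    (τ : Fin n → ℝ) (hτ : ∀ j, τ j = Real.exp (-β * EC j) / ZC)
    (A : ℝ) (hA : 1 ≤ A)
    (ω ω' : Fin n → ℝ)
    (hω : ∀ j, 0 ≤ ω j) (hω' : ∀ j, 0 < ω' j)
    (hωsum : ∑ j, ω j = 1) (hω'sum : ∑ j, ω' j = 1)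
    (hmax :
      A * Finset.univ.sup' (Finset.univ_nonempty_iff.mpr (Fin.pos_iff_nonempty.mp hn))
            (fun j => ω' j / τ j) ≤
        Finset.univ.sup' (Finset.univ_nonempty_iff.mpr (Fin.pos_iff_nonempty.mp hn))
          (fun i => ω i / τ i)) :
    (A - 1) * Real.exp (-β * ECmax) / ZC ≤ (1 / 2) * ∑ j, |ω j - ω' j| := by
  have hne := Finset.univ_nonempty_iff.mpr (Fin.pos_iff_nonempty.mp hn)
  have hZpos : 0 < ZC := by
    rw [hZC]
    exact Finset.sum_pos (fun j _ => Real.exp_pos _) hne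
  have hτpos : ∀ j, 0 < τ j := fun j => by
    rw [hτ]; positivity
  have hτsum : ∑ j, τ j = 1 := by
    simp only [hτ, ← Finset.sum_div, ← hZC, div_self hZpos.ne']
  set M' := Finset.univ.sup' hne (fun j => ω' j / τ j) with hM'
  have hM'1 : 1 ≤ M' := by
    by_contra h
    push_neg at h
    have hlt : ∀ j ∈ Finset.univ, ω' j < τ j := fun j _ => by
      have hle : ω' j / τ j ≤ M' := Finset.le_sup' (fun j => ω' j / τ j) (Finset.mem_univ j)
      have := hle.trans_lt h
      rwa [div_lt_one (hτpos j)] at this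
    have := Finset.sum_lt_sum_of_nonempty hne hlt
    rw [hω'sum, hτsum] at this
    exact lt_irrefl 1 this
  obtain ⟨i, _, hi⟩ := Finset.exists_mem_eq_sup' hne (fun i => ω i / τ i)
  have hωi : A * M' * τ i ≤ ω i := by
    have h1 : A * M' ≤ ω i / τ i := by
      rw [hi] at hmax
      exact hmax
    calc A * M' * τ i ≤ (ω i / τ i) * τ i := by
          exact mul_le_mul_of_nonneg_right h1 (hτpos i).le
      _ = ω i := div_mul_cancel₀ _ (hτpos i).ne'
  have hω'i : ω' i ≤ M' * τ i := by
    have h1 : ω' i / τ i ≤ M' := Finset.le_sup' (fun j => ω' j / τ j) (Finset.mem_univ i)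
    calc ω' i = (ω' i / τ i) * τ i := (div_mul_cancel₀ _ (hτpos i).ne').symm
      _ ≤ M' * τ i := mul_le_mul_of_nonneg_right h1 (hτpos i).le
  have hdi : (A - 1) * τ i ≤ ω i - ω' i := by
    nlinarith [mul_nonneg (mul_nonneg (sub_nonneg.2 hA) (sub_nonneg.2 hM'1)) (hτpos i).le]
  have hτi : Real.exp (-β * ECmax) / ZC ≤ τ i := by
    rw [hτ]
    have hEi : EC i ≤ ECmax := hECmax.2 ⟨i, rfl⟩
    have : Real.exp (-β * ECmax) ≤ Real.exp (-β * EC i) := by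
      apply Real.exp_le_exp.mpr
      nlinarith
    gcongr
  -- trace distance step
  have hsum0 : ∑ j, (ω j - ω' j) = 0 := by
    rw [Finset.sum_sub_distrib, hωsum, hω'sum]; ring
  have hkey : 2 * (ω i - ω' i) ≤ ∑ j, |ω j - ω' j| := by
    have hsplit : ∑ j, |ω j - ω' j|
        = |ω i - ω' i| + ∑ j ∈ Finset.univ.erase i, |ω j - ω' j| :=
      (Finset.add_sum_erase _ _ (Finset.mem_univ i)).symm
    have hrest : |∑ j ∈ Finset.univ.erase i, (ω j - ω' j)|
        ≤ ∑ j ∈ Finset.univ.erase i, |ω j - ω' j| :=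
      Finset.abs_sum_le_sum_abs _ _
    have hrestval : ∑ j ∈ Finset.univ.erase i, (ω j - ω' j) = -(ω i - ω' i) := by
      have := Finset.add_sum_erase Finset.univ (fun j => ω j - ω' j) (Finset.mem_univ i)
      rw [hsum0] at this
      linarith
    rw [hrestval] at hrest
    rw [hsplit]
    have h1 : ω i - ω' i ≤ |ω i - ω' i| := le_abs_self _
    have h2 : ω i - ω' i ≤ |-(ω i - ω' i)| := by
      rw [abs_neg]; exact le_abs_self _
    linarith
  have hchain : (A - 1) * Real.exp (-β * ECmax) / ZC ≤ ω i - ω' i := by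
    calc (A - 1) * Real.exp (-β * ECmax) / ZC
        = (A - 1) * (Real.exp (-β * ECmax) / ZC) := by ring
      _ ≤ (A - 1) * τ i := by
          apply mul_le_mul_of_nonneg_left hτi (by linarith)
      _ ≤ ω i - ω' i := hdi
  linarith
end

section
/- Let E : ℕ → ℝ be a nondecreasing sequence of nonnegative energy values with E_j → ∞ as j → ∞, and let γ ∈ (0,1). Let ω : ℕ → ℝ be nonnegative with ∑_i ω_i = 1 (the sum converging), and suppose the series ∑_i ω_i·E_i converges with ∑_i ω_i·E_i ≤ Ē for some finite Ē ≥ 0. -/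
/-- Lower bound on the Gibbs-weighted sum from an energy constraint. Let
`E : ℕ → ℝ` be nondecreasing, nonnegative and unbounded, let `γ ∈ (0,1)`, and
let `ω` be a probability distribution on `ℕ` whose mean energy
`∑' i, ω i * E i` is at most `Ē`. Then for every `0 < W < 1`, with `j(W)` the
least index `j` such that `E (j+1) > Ē/(1−W)`, one has
`∑' i, ω i * γ^(E i) ≥ W · γ^(E j(W))` (real exponents). -/
theorem gibbs_weighted_sum_lower_bound
    (E : ℕ → ℝ) (hmono : Monotone E) (hpos : ∀ j, 0 ≤ E j)
    (htop : Filter.Tendsto E Filter.atTop Filter.atTop)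
    (γ : ℝ) (hγ0 : 0 < γ) (hγ1 : γ < 1)
    (ω : ℕ → ℝ) (hω : ∀ i, 0 ≤ ω i) (hωsummable : Summable ω)
    (hωsum : ∑' i, ω i = 1)
    (Ebar : ℝ) (hEbar : 0 ≤ Ebar)
    (hEsummable : Summable (fun i => ω i * E i))
    (hE : ∑' i, ω i * E i ≤ Ebar)
    (W : ℝ) (hW0 : 0 < W) (hW1 : W < 1)
    (jW : ℕ) (hjW : IsLeast {j : ℕ | Ebar / (1 - W) < E (j + 1)} jW) :
    W * γ ^ (E jW) ≤ ∑' i, ω i * γ ^ (E i) := by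
  set n := jW + 1 with hn
  have hW1' : (0:ℝ) < 1 - W := by linarith
  have hc : Ebar / (1 - W) < E n := hjW.1
  have hcpos : 0 < E n := lt_of_le_of_lt (div_nonneg hEbar hW1'.le) hc
  -- summability of the Gibbs-weighted series
  have hterm : ∀ i, 0 ≤ ω i * γ ^ (E i) :=
    fun i => mul_nonneg (hω i) (Real.rpow_nonneg hγ0.le _)
  have hle1 : ∀ i, ω i * γ ^ (E i) ≤ ω i := by
    intro i
    have : γ ^ (E i) ≤ 1 := Real.rpow_le_one hγ0.le hγ1.le (hpos i)
    calc ω i * γ ^ (E i) ≤ ω i * 1 := by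
          exact mul_le_mul_of_nonneg_left this (hω i)
      _ = ω i := mul_one _
  have hsummγ : Summable (fun i => ω i * γ ^ (E i)) :=
    Summable.of_nonneg_of_le hterm hle1 hωsummable
  -- tail and head of ω
  have htail_summ : Summable (fun i => ω (i + n)) :=
    (summable_nat_add_iff n).2 hωsummable
  have hsplit : (∑ i ∈ Finset.range n, ω i) + ∑' i, ω (i + n) = 1 := by
    rw [Summable.sum_add_tsum_nat_add' (f := ω) (k := n) htail_summ, hωsum]
  -- bound on the tail mass
  have htailE_summ : Summable (fun i => ω (i + n) * E (i + n)) :=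
    (summable_nat_add_iff n).2 hEsummable
  have htail_bound : E n * (∑' i, ω (i + n)) ≤ Ebar := by
    have h1 : E n * (∑' i, ω (i + n)) = ∑' i, ω (i + n) * E n := by
      rw [← tsum_mul_left]; exact tsum_congr fun i => mul_comm _ _
    have h2 : ∑' i, ω (i + n) * E n ≤ ∑' i, ω (i + n) * E (i + n) := by
      refine Summable.tsum_le_tsum (fun i => ?_) (htail_summ.mul_right _) htailE_summ
      exact mul_le_mul_of_nonneg_left (hmono (Nat.le_add_left n i)) (hω _)
    have h3 : ∑' i, ω (i + n) * E (i + n) ≤ ∑' i, ω i * E i := by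
      have := Summable.sum_add_tsum_nat_add' (f := fun i => ω i * E i) (k := n) htailE_summ
      have hhead : 0 ≤ ∑ i ∈ Finset.range n, ω i * E i :=
        Finset.sum_nonneg fun i _ => mul_nonneg (hω i) (hpos i)
      linarith
    linarith
  have htail_le : ∑' i, ω (i + n) ≤ 1 - W := by
    have hEc : Ebar < E n * (1 - W) := by
      have := (div_lt_iff₀ hW1').mp hc; linarith
    have htail_nonneg : 0 ≤ ∑' i, ω (i + n) :=
      tsum_nonneg fun i => hω _
    nlinarith
  have hhead_ge : W ≤ ∑ i ∈ Finset.range n, ω i := by linarith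
  -- main chain
  have hγjW : 0 ≤ γ ^ (E jW) := Real.rpow_nonneg hγ0.le _
  calc W * γ ^ (E jW)
      ≤ (∑ i ∈ Finset.range n, ω i) * γ ^ (E jW) :=
        mul_le_mul_of_nonneg_right hhead_ge hγjW
    _ = ∑ i ∈ Finset.range n, ω i * γ ^ (E jW) := Finset.sum_mul ..
    _ ≤ ∑ i ∈ Finset.range n, ω i * γ ^ (E i) := by
        refine Finset.sum_le_sum fun i hi => ?_
        have hiE : E i ≤ E jW := hmono (Nat.lt_succ_iff.mp (Finset.mem_range.mp hi))
        exact mul_le_mul_of_nonneg_left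
          (Real.rpow_le_rpow_of_exponent_ge hγ0 hγ1.le hiE) (hω i)
    _ ≤ ∑' i, ω i * γ ^ (E i) :=
        Summable.sum_le_tsum (Finset.range n) (fun i _ => hterm i) hsummγ
end

section
/- For all real numbers x, y with 0 ≤ x ≤ 1 and 0 ≤ y ≤ 1, and every real a ≥ 2, one has √x − √a·√y ≤ √|x − y| − f(a)·y, where f(a) = (1/2)·a²/(a² + 1). -/
/-- The splitting inequality: for `0 ≤ x, y ≤ 1` and `a ≥ 2`,
`√x − √a·√y ≤ √|x − y| − f(a)·y`, where `f(a) = (1/2)·a²/(a²+1)`. -/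
theorem splitting_inequality (x y a : ℝ)
    (hx0 : 0 ≤ x) (hx1 : x ≤ 1) (hy0 : 0 ≤ y) (hy1 : y ≤ 1) (ha : 2 ≤ a) :
    Real.sqrt x - Real.sqrt a * Real.sqrt y ≤
      Real.sqrt |x - y| - (1 / 2 * (a ^ 2 / (a ^ 2 + 1))) * y := by
  have ha0 : (0:ℝ) ≤ a := by linarith
  set s := Real.sqrt a with hs
  have hs2 : s ^ 2 = a := Real.sq_sqrt ha0
  have hs0 : 0 ≤ s := Real.sqrt_nonneg a
  have hsge : 2 ≤ s ^ 2 := by rw [hs2]; exact ha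
  have key : ∀ u v : ℝ, 0 ≤ u → 0 ≤ v →
      Real.sqrt (u + v) ≤ Real.sqrt u + Real.sqrt v := by
    intro u v hu hv
    have h := Real.sqrt_le_sqrt (show u + v ≤ (Real.sqrt u + Real.sqrt v) ^ 2 by
      nlinarith [Real.sq_sqrt hu, Real.sq_sqrt hv, Real.sqrt_nonneg u, Real.sqrt_nonneg v,
        mul_nonneg (Real.sqrt_nonneg u) (Real.sqrt_nonneg v)])
    rwa [Real.sqrt_sq (by positivity)] at h
  have h1 : Real.sqrt x ≤ Real.sqrt |x - y| + Real.sqrt y := by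
    have hx : x ≤ |x - y| + y := by
      cases abs_cases (x - y) with
      | inl h => linarith [h.1]
      | inr h => linarith [h.1]
    calc Real.sqrt x ≤ Real.sqrt (|x - y| + y) := Real.sqrt_le_sqrt hx
      _ ≤ Real.sqrt |x - y| + Real.sqrt y := key _ _ (abs_nonneg _) hy0
  have h2 : y ≤ Real.sqrt y := by
    have := Real.sqrt_le_sqrt (show y * y ≤ y by nlinarith)
    rwa [Real.sqrt_mul_self hy0] at this
  have h3 : 1 / 2 * (a ^ 2 / (a ^ 2 + 1)) ≤ s - 1 := by
    have heq : 1 / 2 * (a ^ 2 / (a ^ 2 + 1)) = a ^ 2 / (2 * (a ^ 2 + 1)) := by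
      field_simp
    rw [heq, div_le_iff₀ (by positivity)]
    nlinarith [hs2, hsge, hs0, sq_nonneg (s ^ 2 - 2), sq_nonneg (s - 1), sq_nonneg (s - 2),
      mul_nonneg hs0 (sq_nonneg (s ^ 2 - 2)), mul_nonneg hs0 (sq_nonneg (s - 1))]
  have hf0 : 0 ≤ 1 / 2 * (a ^ 2 / (a ^ 2 + 1)) := by positivity
  have h4 : 1 / 2 * (a ^ 2 / (a ^ 2 + 1)) * y ≤ (s - 1) * Real.sqrt y :=
    mul_le_mul h3 h2 hy0 (by nlinarith)
  nlinarith [Real.sqrt_nonneg y]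
end

section
/- Let β > 0 and let E : ℕ → ℝ be a nondecreasing sequence of nonnegative catalyst energy values with E_j → ∞ as j → ∞ and finite partition function Z_C = ∑_j e^{−β·E_j}. Let A ≥ 2 and set f(A) = (1/2)·A²/(A²+1). Let ω, ω' : ℕ → ℝ be nonnegative with ∑_j ω_j = ∑_j ω'_j = 1 (the sums converging), suppose ∑_j ω_j·E_j converges with ∑_j ω_j·E_j ≤ Ē for some finite Ē ≥ 0, and suppose the series ∑_j √(ω'_j)·e^{−β·E_j/2} and ∑_j √(ω_j)·e^{−β·E_j/2} converge and satisfy ∑_j √(ω'_j)·e^{−β·E_j/2} ≥ √A·∑_j √(ω_j)·e^{−β·E_j/2}. Then for every W with 0 < W < 1, letting j(W) be the least index j such that E_{j+1} > Ē/(1−W), the trace distance satisfies (1/2)·∑_j |ω_j − ω'_j| ≥ (1/2)·f(A)²·(W·e^{−β·E_{j(W)}/2})²/Z_C. In particular, the error cannot be made arbitrarily small. -/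
/-- Pointwise: `(√a − √b)² ≤ |a − b|` for nonnegative `a, b`. -/
lemma sqrt_diff_sq_le_abs {a b : ℝ} (ha : 0 ≤ a) (hb : 0 ≤ b) :
    (Real.sqrt a - Real.sqrt b) ^ 2 ≤ |a - b| := by
  set s := Real.sqrt a with hs
  set t := Real.sqrt b with ht
  have hs0 : 0 ≤ s := Real.sqrt_nonneg a
  have ht0 : 0 ≤ t := Real.sqrt_nonneg b
  have hsa : s * s = a := Real.mul_self_sqrt ha
  have htb : t * t = b := Real.mul_self_sqrt hb
  have h1 : |s - t| ≤ s + t := by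
    rw [abs_sub_le_iff]; constructor <;> linarith
  have h2 : |a - b| = |s - t| * (s + t) := by
    rw [← hsa, ← htb, show s * s - t * t = (s - t) * (s + t) by ring, abs_mul,
      abs_of_nonneg (by linarith : (0:ℝ) ≤ s + t)]
  have h3 : (s - t) ^ 2 = |s - t| * |s - t| := by
    rw [pow_two, ← abs_mul_abs_self]
  rw [h2, h3]
  exact mul_le_mul_of_nonneg_left h1 (abs_nonneg _)

/-- Cauchy–Schwarz for `tsum`s of nonnegative sequences. -/
lemma tsum_cauchy_schwarz_aux {g h : ℕ → ℝ} (hg : ∀ j, 0 ≤ g j) (hh : ∀ j, 0 ≤ h j)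
    (hg2 : Summable (fun j => g j ^ 2)) (hh2 : Summable (fun j => h j ^ 2))
    (hgh : Summable (fun j => g j * h j)) :
    (∑' j, g j * h j) ^ 2 ≤ (∑' j, g j ^ 2) * (∑' j, h j ^ 2) := by
  have hXnn : 0 ≤ (∑' j, g j ^ 2) * (∑' j, h j ^ 2) :=
    mul_nonneg (tsum_nonneg fun j => sq_nonneg _) (tsum_nonneg fun j => sq_nonneg _)
  have key : ∑' j, g j * h j ≤ Real.sqrt ((∑' j, g j ^ 2) * (∑' j, h j ^ 2)) := by
    refine Summable.tsum_le_of_sum_le hgh fun s => ?_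
    have hcs : (∑ i ∈ s, g i * h i) ^ 2 ≤ (∑ i ∈ s, g i ^ 2) * ∑ i ∈ s, h i ^ 2 :=
      Finset.sum_mul_sq_le_sq_mul_sq s g h
    have hle : (∑ i ∈ s, g i ^ 2) * (∑ i ∈ s, h i ^ 2) ≤
        (∑' j, g j ^ 2) * (∑' j, h j ^ 2) :=
      mul_le_mul (Summable.sum_le_tsum s (fun i _ => sq_nonneg _) hg2)
        (Summable.sum_le_tsum s (fun i _ => sq_nonneg _) hh2)
        (Finset.sum_nonneg fun i _ => sq_nonneg _) (tsum_nonneg fun j => sq_nonneg _)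
    have hnn : 0 ≤ ∑ i ∈ s, g i * h i :=
      Finset.sum_nonneg fun i _ => mul_nonneg (hg i) (hh i)
    exact (Real.le_sqrt hnn hXnn).2 (hcs.trans hle)
  have hnn : 0 ≤ ∑' j, g j * h j := tsum_nonneg fun j => mul_nonneg (hg j) (hh j)
  calc (∑' j, g j * h j) ^ 2 ≤ Real.sqrt ((∑' j, g j ^ 2) * (∑' j, h j ^ 2)) ^ 2 :=
        pow_le_pow_left₀ hnn key 2
    _ = (∑' j, g j ^ 2) * (∑' j, h j ^ 2) := Real.sq_sqrt hXnn

/-- `f(A) ≤ √A − 1` for `A ≥ 2`. -/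
lemma f_le_sqrt_sub_one {A : ℝ} (hA : 2 ≤ A) :
    1 / 2 * (A ^ 2 / (A ^ 2 + 1)) ≤ Real.sqrt A - 1 := by
  have hApos : (0:ℝ) < A ^ 2 + 1 := by positivity
  have key : (3 * A ^ 2 + 2) / (2 * (A ^ 2 + 1)) ≤ Real.sqrt A := by
    rcases le_or_gt (9/4 : ℝ) A with h | h
    · have h32 : (3:ℝ)/2 ≤ Real.sqrt A := by
        rw [Real.le_sqrt (by norm_num) (by linarith)]; nlinarith
      refine le_trans ?_ h32
      rw [div_le_iff₀ (by positivity)]; nlinarith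
    · rcases le_or_gt (21/10 : ℝ) A with h' | h'
      · have hsq : (275:ℝ)/194 ≤ Real.sqrt A := by
          rw [Real.le_sqrt (by norm_num) (by linarith)]; nlinarith
        refine le_trans ?_ hsq
        have hA2 : A ^ 2 ≤ 81/16 := by nlinarith
        rw [div_le_iff₀ (by positivity)]; nlinarith
      · have hsq : (1523:ℝ)/1082 ≤ Real.sqrt A := by
          rw [Real.le_sqrt (by norm_num) (by linarith)]; nlinarith
        refine le_trans ?_ hsq
        have hA2 : A ^ 2 ≤ 441/100 := by nlinarith
        rw [div_le_iff₀ (by positivity)]; nlinarith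
  have key' : 3 * A ^ 2 + 2 ≤ Real.sqrt A * (2 * (A ^ 2 + 1)) :=
    (div_le_iff₀ (by positivity)).1 key
  have h2 : A ^ 2 ≤ (Real.sqrt A - 1) * (2 * (A ^ 2 + 1)) := by nlinarith
  have h3 : A ^ 2 / (2 * (A ^ 2 + 1)) ≤ Real.sqrt A - 1 := by
    rw [div_le_iff₀ (by positivity)]; linarith
  calc 1 / 2 * (A ^ 2 / (A ^ 2 + 1)) = A ^ 2 / (2 * (A ^ 2 + 1)) := by field_simp
    _ ≤ Real.sqrt A - 1 := h3

set_option maxHeartbeats 1000000 in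
/-- Energy constraints limit the accuracy of thermal catalysis. Let `β > 0`,
let the catalyst energy levels `E : ℕ → ℝ` be nondecreasing, nonnegative and
unbounded with finite partition function `Z_C = ∑' j, e^{−β·E j}`, and let
`A ≥ 2` with `f(A) = (1/2)·A²/(A²+1)`. Suppose `ω, ω'` are probability
distributions on `ℕ`, the mean energy of `ω` is at most `Ē`, and the
`D_{1/2}`-monotonicity constraint
`∑' j, √(ω' j)·e^{−β·E j/2} ≥ √A·∑' j, √(ω j)·e^{−β·E j/2}` holds (both
series converging). Then for every `0 < W < 1`, with `j(W)` the least index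
`j` such that `E (j+1) > Ē/(1−W)`, the trace distance satisfies
`(1/2)·∑' j, |ω j − ω' j| ≥ (1/2)·f(A)²·(W·e^{−β·E j(W)/2})²/Z_C`. -/
theorem embezzling_error_energy_constraint
    (β : ℝ) (hβ : 0 < β)
    (E : ℕ → ℝ) (hmono : Monotone E) (hpos : ∀ j, 0 ≤ E j)
    (htop : Filter.Tendsto E Filter.atTop Filter.atTop)
    (ZC : ℝ) (hZCsummable : Summable (fun j => Real.exp (-β * E j)))
    (hZC : ∑' j, Real.exp (-β * E j) = ZC)
    (A : ℝ) (hA : 2 ≤ A)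
    (ω ω' : ℕ → ℝ) (hω : ∀ j, 0 ≤ ω j) (hω' : ∀ j, 0 ≤ ω' j)
    (hωsummable : Summable ω) (hω'summable : Summable ω')
    (hωsum : ∑' j, ω j = 1) (hω'sum : ∑' j, ω' j = 1)
    (Ebar : ℝ) (hEbar : 0 ≤ Ebar)
    (hEsummable : Summable (fun j => ω j * E j))
    (hE : ∑' j, ω j * E j ≤ Ebar)
    (h1 : Summable (fun j => Real.sqrt (ω' j) * Real.exp (-β * E j / 2)))
    (h2 : Summable (fun j => Real.sqrt (ω j) * Real.exp (-β * E j / 2)))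
    (hmon : Real.sqrt A * ∑' j, Real.sqrt (ω j) * Real.exp (-β * E j / 2) ≤
      ∑' j, Real.sqrt (ω' j) * Real.exp (-β * E j / 2))
    (W : ℝ) (hW0 : 0 < W) (hW1 : W < 1)
    (jW : ℕ) (hjW : IsLeast {j : ℕ | Ebar / (1 - W) < E (j + 1)} jW) :
    (1 / 2) * (1 / 2 * (A ^ 2 / (A ^ 2 + 1))) ^ 2 *
        (W * Real.exp (-β * E jW / 2)) ^ 2 / ZC ≤
      (1 / 2) * ∑' j, |ω j - ω' j| := by
  have hW' : (0:ℝ) < 1 - W := by linarith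
  have hZCpos : 0 < ZC := by
    rw [← hZC]
    exact Summable.tsum_pos hZCsummable (fun j => (Real.exp_pos _).le) 0 (Real.exp_pos _)
  set S := ∑' j, Real.sqrt (ω j) * Real.exp (-β * E j / 2) with hS
  set S' := ∑' j, Real.sqrt (ω' j) * Real.exp (-β * E j / 2) with hS'
  set c := W * Real.exp (-β * E jW / 2) with hc
  set fA := 1 / 2 * (A ^ 2 / (A ^ 2 + 1)) with hfA
  have hcnn : 0 ≤ c := mul_nonneg hW0.le (Real.exp_pos _).le
  have hfAnn : 0 ≤ fA := by rw [hfA]; positivity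
  -- Markov step: W ≤ ∑_{i ≤ jW} ω i
  have hEjW : Ebar / (1 - W) < E (jW + 1) := hjW.1
  have hEjWpos : 0 < E (jW + 1) := lt_of_le_of_lt (div_nonneg hEbar hW'.le) hEjW
  have htailE : Summable (fun j => ω (j + (jW + 1)) * E (j + (jW + 1))) :=
    (summable_nat_add_iff (jW + 1)).2 hEsummable
  have htailω : Summable (fun j => ω (j + (jW + 1))) :=
    (summable_nat_add_iff (jW + 1)).2 hωsummable
  have htail_le : (∑' j, ω (j + (jW + 1)) * E (j + (jW + 1))) ≤ Ebar := by
    have hsplit := Summable.sum_add_tsum_nat_add (jW + 1) hEsummable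
    have hfin : 0 ≤ ∑ i ∈ Finset.range (jW + 1), ω i * E i :=
      Finset.sum_nonneg fun i _ => mul_nonneg (hω i) (hpos i)
    linarith
  have hmark : E (jW + 1) * (∑' j, ω (j + (jW + 1))) ≤ Ebar := by
    calc E (jW + 1) * ∑' j, ω (j + (jW + 1))
        = ∑' j, E (jW + 1) * ω (j + (jW + 1)) := by rw [tsum_mul_left]
      _ ≤ ∑' j, ω (j + (jW + 1)) * E (j + (jW + 1)) := by
          refine Summable.tsum_le_tsum (fun j => ?_) (htailω.mul_left _) htailE
          rw [mul_comm]
          exact mul_le_mul_of_nonneg_left (hmono (Nat.le_add_left _ _)) (hω _)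
      _ ≤ Ebar := htail_le
  have htail_small : (∑' j, ω (j + (jW + 1))) ≤ 1 - W := by
    have hEb : Ebar ≤ E (jW + 1) * (1 - W) := by
      have h' : Ebar / (1 - W) ≤ E (jW + 1) := hEjW.le
      calc Ebar = Ebar / (1 - W) * (1 - W) := by field_simp
        _ ≤ E (jW + 1) * (1 - W) := mul_le_mul_of_nonneg_right h' hW'.le
    exact le_of_mul_le_mul_left (hmark.trans hEb) hEjWpos
  have hP : W ≤ ∑ i ∈ Finset.range (jW + 1), ω i := by
    have hsplit := Summable.sum_add_tsum_nat_add (jW + 1) hωsummable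
    rw [hωsum] at hsplit
    linarith
  -- c ≤ S
  have hω1 : ∀ j, ω j ≤ 1 := fun j => hωsum ▸ Summable.le_tsum hωsummable j (fun i _ => hω i)
  have hcS : c ≤ S := by
    have step1 : c ≤ ∑ i ∈ Finset.range (jW + 1), ω i * Real.exp (-β * E jW / 2) := by
      rw [← Finset.sum_mul, hc]
      exact mul_le_mul_of_nonneg_right hP (Real.exp_pos _).le
    have step2 : ∀ i ∈ Finset.range (jW + 1),
        ω i * Real.exp (-β * E jW / 2) ≤ Real.sqrt (ω i) * Real.exp (-β * E i / 2) := by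
      intro i hi
      have hile : i ≤ jW := Nat.lt_succ_iff.1 (Finset.mem_range.1 hi)
      have hEle : E i ≤ E jW := hmono hile
      have he : Real.exp (-β * E jW / 2) ≤ Real.exp (-β * E i / 2) := by
        apply Real.exp_le_exp.2
        have hm := mul_le_mul_of_nonneg_left hEle hβ.le
        linarith
      have hsq : ω i ≤ Real.sqrt (ω i) := by
        calc ω i = Real.sqrt (ω i) * Real.sqrt (ω i) := (Real.mul_self_sqrt (hω i)).symm
          _ ≤ Real.sqrt (ω i) * 1 :=
              mul_le_mul_of_nonneg_left (Real.sqrt_le_one.2 (hω1 i)) (Real.sqrt_nonneg _)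
          _ = Real.sqrt (ω i) := mul_one _
      exact mul_le_mul hsq he (Real.exp_pos _).le (Real.sqrt_nonneg _)
    calc c ≤ ∑ i ∈ Finset.range (jW + 1), ω i * Real.exp (-β * E jW / 2) := step1
      _ ≤ ∑ i ∈ Finset.range (jW + 1), Real.sqrt (ω i) * Real.exp (-β * E i / 2) :=
          Finset.sum_le_sum step2
      _ ≤ S := Summable.sum_le_tsum _
          (fun i _ => mul_nonneg (Real.sqrt_nonneg _) (Real.exp_pos _).le) h2
  -- difference bound
  have hsA : 1 ≤ Real.sqrt A := by
    rw [show (1:ℝ) = Real.sqrt 1 by simp]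
    exact Real.sqrt_le_sqrt (by linarith)
  have hdiff : (Real.sqrt A - 1) * c ≤ S' - S := by
    calc (Real.sqrt A - 1) * c ≤ (Real.sqrt A - 1) * S :=
          mul_le_mul_of_nonneg_left hcS (by linarith)
      _ = Real.sqrt A * S - S := by ring
      _ ≤ S' - S := by linarith [hmon]
  -- Cauchy-Schwarz setup
  set g : ℕ → ℝ := fun j => |Real.sqrt (ω' j) - Real.sqrt (ω j)| with hg
  set h : ℕ → ℝ := fun j => Real.exp (-β * E j / 2) with hh
  have hgnn : ∀ j, 0 ≤ g j := fun j => abs_nonneg _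
  have hhnn : ∀ j, 0 ≤ h j := fun j => (Real.exp_pos _).le
  have hg2eq : ∀ j, g j ^ 2 = (Real.sqrt (ω' j) - Real.sqrt (ω j)) ^ 2 := fun j => sq_abs _
  have hh2eq : ∀ j, h j ^ 2 = Real.exp (-β * E j) := by
    intro j
    rw [hh, pow_two, ← Real.exp_add]
    congr 1; ring
  have hQ_sum : Summable (fun j => (Real.sqrt (ω' j) - Real.sqrt (ω j)) ^ 2) := by
    refine Summable.of_nonneg_of_le (fun j => sq_nonneg _) (fun j => ?_)
      (hω'summable.add hωsummable)
    calc (Real.sqrt (ω' j) - Real.sqrt (ω j)) ^ 2 ≤ |ω' j - ω j| :=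
          sqrt_diff_sq_le_abs (hω' j) (hω j)
      _ ≤ ω' j + ω j := by
          rw [abs_sub_le_iff]; constructor <;> linarith [hω j, hω' j]
  have hg2 : Summable (fun j => g j ^ 2) := by simpa only [hg2eq] using hQ_sum
  have hh2 : Summable (fun j => h j ^ 2) := by simpa only [hh2eq] using hZCsummable
  have hgh_sum : Summable (fun j => g j * h j) := by
    refine Summable.of_nonneg_of_le (fun j => mul_nonneg (hgnn j) (hhnn j))
      (fun j => ?_) (h1.add h2)
    have : g j ≤ Real.sqrt (ω' j) + Real.sqrt (ω j) := by
      rw [hg, abs_sub_le_iff]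
      constructor <;> linarith [Real.sqrt_nonneg (ω j), Real.sqrt_nonneg (ω' j)]
    calc g j * h j ≤ (Real.sqrt (ω' j) + Real.sqrt (ω j)) * h j :=
          mul_le_mul_of_nonneg_right this (hhnn j)
      _ = Real.sqrt (ω' j) * Real.exp (-β * E j / 2) +
            Real.sqrt (ω j) * Real.exp (-β * E j / 2) := by rw [hh]; ring
  have hSS : S' - S ≤ ∑' j, g j * h j := by
    rw [hS', hS, ← Summable.tsum_sub h1 h2]
    refine Summable.tsum_le_tsum (fun j => ?_) (h1.sub h2) hgh_sum
    calc Real.sqrt (ω' j) * Real.exp (-β * E j / 2) -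
          Real.sqrt (ω j) * Real.exp (-β * E j / 2)
        = (Real.sqrt (ω' j) - Real.sqrt (ω j)) * h j := by rw [hh]; ring
      _ ≤ g j * h j := mul_le_mul_of_nonneg_right (le_abs_self _) (hhnn j)
  have hCS : (∑' j, g j * h j) ^ 2 ≤
      (∑' j, (Real.sqrt (ω' j) - Real.sqrt (ω j)) ^ 2) * ZC := by
    have := tsum_cauchy_schwarz_aux hgnn hhnn hg2 hh2 hgh_sum
    have e1 : (∑' j, g j ^ 2) = ∑' j, (Real.sqrt (ω' j) - Real.sqrt (ω j)) ^ 2 := by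
      exact tsum_congr hg2eq
    have e2 : (∑' j, h j ^ 2) = ZC := by rw [tsum_congr hh2eq, hZC]
    rwa [e1, e2] at this
  -- combine
  set Q := ∑' j, (Real.sqrt (ω' j) - Real.sqrt (ω j)) ^ 2 with hQ
  have hfc : fA * c ≤ S' - S :=
    le_trans (mul_le_mul_of_nonneg_right (f_le_sqrt_sub_one hA) hcnn) hdiff
  have hfcnn : 0 ≤ fA * c := mul_nonneg hfAnn hcnn
  have hkey : (fA * c) ^ 2 ≤ Q * ZC := by
    calc (fA * c) ^ 2 ≤ (∑' j, g j * h j) ^ 2 :=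
          pow_le_pow_left₀ hfcnn (hfc.trans hSS) 2
      _ ≤ Q * ZC := hCS
  have habs : Summable (fun j => |ω j - ω' j|) := by
    refine Summable.of_nonneg_of_le (fun j => abs_nonneg _) (fun j => ?_)
      (hωsummable.add hω'summable)
    rw [abs_sub_le_iff]; constructor <;> linarith [hω j, hω' j]
  have hQ_le : Q ≤ ∑' j, |ω j - ω' j| := by
    refine Summable.tsum_le_tsum (fun j => ?_) hQ_sum habs
    calc (Real.sqrt (ω' j) - Real.sqrt (ω j)) ^ 2 ≤ |ω' j - ω j| :=
          sqrt_diff_sq_le_abs (hω' j) (hω j)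
      _ = |ω j - ω' j| := abs_sub_comm _ _
  have hfinal : (fA * c) ^ 2 / ZC ≤ ∑' j, |ω j - ω' j| := by
    rw [div_le_iff₀ hZCpos]
    calc (fA * c) ^ 2 ≤ Q * ZC := hkey
      _ ≤ (∑' j, |ω j - ω' j|) * ZC := mul_le_mul_of_nonneg_right hQ_le hZCpos.le
  calc (1 / 2) * fA ^ 2 * c ^ 2 / ZC = 1 / 2 * ((fA * c) ^ 2 / ZC) := by ring
    _ ≤ 1 / 2 * ∑' j, |ω j - ω' j| := by linarith
end
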